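/- arXiv:1812.04221 — 8 statements merged into one kernel-verified Lean document; each statement's English description precedes it below -/
import Mathlib

section
/- Let k be a real number and for x > 2 set y(x) = (x² − 4)^{−1/2}. Then the function f_k(x) = y(x)^k = (x² − 4)^{−k/2} satisfies, for every x > 2, ((x² − 4)²/x)·f_k‴(x) + 8(x² − 4)·f_k″(x) + ((14x² − 24)/x)·f_k′(x) + 4·f_k(x) = (1 − k)(k − 2)²·y(x)^k − 4k²(k − 2)·y(x)^{k+2}. Equivalently, the differential operator E = (1/(x·y⁴))·d³/dx³ + (8/y²)·d²/dx² + ((14x² − 24)/x)·d/dx + 4 satisfies E(yᵏ) = (1 − k)(k − 2)²·yᵏ − 4k²(k − 2)·y^{k+2}. -/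
private lemma hd0 (p : ℝ) {x : ℝ} (hx : 2 < x) :
    HasDerivAt (fun x : ℝ => (x ^ 2 - 4) ^ p) (2 * p * x * (x ^ 2 - 4) ^ (p - 1)) x := by
  have h : HasDerivAt (fun x : ℝ => x ^ 2 - 4) (2 * x) x := by
    simpa using ((hasDerivAt_pow 2 x).sub_const 4)
  have hne : x ^ 2 - 4 ≠ 0 := by nlinarith
  have := h.rpow_const (p := p) (Or.inl hne)
  convert this using 1
  ring

private lemma hd1 (p : ℝ) {x : ℝ} (hx : 2 < x) :
    HasDerivAt (fun x : ℝ => 2 * p * x * (x ^ 2 - 4) ^ (p - 1))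
      (4 * p * (p - 1) * x ^ 2 * (x ^ 2 - 4) ^ (p - 2) + 2 * p * (x ^ 2 - 4) ^ (p - 1)) x := by
  have h1 : HasDerivAt (fun x : ℝ => 2 * p * x) (2 * p) x := by
    simpa using (hasDerivAt_id x).const_mul (2 * p)
  have h2 := hd0 (p - 1) hx
  rw [show p - 1 - 1 = p - 2 by ring] at h2
  have := h1.fun_mul h2
  refine this.congr_deriv ?_
  ring

private lemma hd2 (p : ℝ) {x : ℝ} (hx : 2 < x) :
    HasDerivAt (fun x : ℝ => 4 * p * (p - 1) * x ^ 2 * (x ^ 2 - 4) ^ (p - 2)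
        + 2 * p * (x ^ 2 - 4) ^ (p - 1))
      (8 * p * (p - 1) * (p - 2) * x ^ 3 * (x ^ 2 - 4) ^ (p - 3)
        + 12 * p * (p - 1) * x * (x ^ 2 - 4) ^ (p - 2)) x := by
  have hx2 : HasDerivAt (fun x : ℝ => 4 * p * (p - 1) * x ^ 2) (4 * p * (p - 1) * (2 * x)) x := by
    simpa using (hasDerivAt_pow 2 x).const_mul (4 * p * (p - 1))
  have h2 := hd0 (p - 2) hx
  rw [show p - 2 - 1 = p - 3 by ring] at h2
  have h1 := hd0 (p - 1) hx
  rw [show p - 1 - 1 = p - 2 by ring] at h1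
  have := (hx2.fun_mul h2).fun_add (h1.const_mul (2 * p))
  refine this.congr_deriv ?_
  ring

/-- For real `k` and `x > 2`, the function
`f_k(x) = (x² − 4)^(−k/2) = y(x)^k` (where `y(x) = (x² − 4)^(−1/2)`) satisfies
`E(yᵏ) = (1 − k)(k − 2)²·yᵏ − 4k²(k − 2)·y^{k+2}` for the operator
`E = (1/(x·y⁴))·d³/dx³ + (8/y²)·d²/dx² + ((14x² − 24)/x)·d/dx + 4` on `(2, ∞)`. -/
theorem theta_Eop_action (k : ℝ) (f : ℝ → ℝ)
    (hf : ∀ x : ℝ, f x = (x ^ 2 - 4) ^ (-(k / 2)) ) :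
    ∀ x : ℝ, 2 < x →
      ((x ^ 2 - 4) ^ 2 / x) * iteratedDeriv 3 f x
        + 8 * (x ^ 2 - 4) * iteratedDeriv 2 f x
        + ((14 * x ^ 2 - 24) / x) * deriv f x
        + 4 * f x
      = (1 - k) * (k - 2) ^ 2 * (x ^ 2 - 4) ^ (-(k / 2))
        - 4 * k ^ 2 * (k - 2) * (x ^ 2 - 4) ^ (-((k + 2) / 2)) := by
  intro x hx
  set p : ℝ := -(k / 2) with hp
  have hfe : f = fun x : ℝ => (x ^ 2 - 4) ^ p := funext hf
  have h1 : ∀ y : ℝ, 2 < y → deriv f y = 2 * p * y * (y ^ 2 - 4) ^ (p - 1) := by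
    intro y hy
    rw [hfe]
    exact (hd0 p hy).deriv
  have h2 : ∀ y : ℝ, 2 < y → deriv (deriv f) y
      = 4 * p * (p - 1) * y ^ 2 * (y ^ 2 - 4) ^ (p - 2) + 2 * p * (y ^ 2 - 4) ^ (p - 1) := by
    intro y hy
    have hev : deriv f =ᶠ[nhds y] fun z => 2 * p * z * (z ^ 2 - 4) ^ (p - 1) := by
      filter_upwards [isOpen_Ioi.mem_nhds (show y ∈ Set.Ioi 2 from hy)] with z hz
      exact h1 z hz
    rw [hev.deriv_eq]
    exact (hd1 p hy).deriv
  have h3 : deriv (deriv (deriv f)) x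
      = 8 * p * (p - 1) * (p - 2) * x ^ 3 * (x ^ 2 - 4) ^ (p - 3)
        + 12 * p * (p - 1) * x * (x ^ 2 - 4) ^ (p - 2) := by
    have hev : deriv (deriv f) =ᶠ[nhds x]
        fun z => 4 * p * (p - 1) * z ^ 2 * (z ^ 2 - 4) ^ (p - 2)
          + 2 * p * (z ^ 2 - 4) ^ (p - 1) := by
      filter_upwards [isOpen_Ioi.mem_nhds (show x ∈ Set.Ioi 2 from hx)] with z hz
      exact h2 z hz
    rw [hev.deriv_eq]
    exact (hd2 p hx).deriv
  have hit3 : iteratedDeriv 3 f x = deriv (deriv (deriv f)) x := by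
    simp [iteratedDeriv_succ, iteratedDeriv_zero]
  have hit2 : iteratedDeriv 2 f x = deriv (deriv f) x := by
    simp [iteratedDeriv_succ, iteratedDeriv_zero]
  rw [hit3, hit2, h3, h2 x hx, h1 x hx, hf x]
  have hu : (0:ℝ) < x ^ 2 - 4 := by nlinarith
  have hx0 : x ≠ 0 := by linarith
  have hpe : -((k + 2) / 2) = p - 1 := by rw [hp]; ring
  rw [hpe]
  have e3 : (x ^ 2 - 4) ^ p = (x ^ 2 - 4) ^ (p - 1) * (x ^ 2 - 4) := by
    rw [← Real.rpow_add_one hu.ne']; congr 1; ring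
  have e2 : (x ^ 2 - 4) ^ (p - 1) = (x ^ 2 - 4) ^ (p - 2) * (x ^ 2 - 4) := by
    rw [← Real.rpow_add_one hu.ne']; congr 1; ring
  have e1 : (x ^ 2 - 4) ^ (p - 2) = (x ^ 2 - 4) ^ (p - 3) * (x ^ 2 - 4) := by
    rw [← Real.rpow_add_one hu.ne']; congr 1; ring
  rw [e3, e2, e1, hp]
  field_simp
  ring
end

section
/- For every integer n ≥ 1, the following identity of rational numbers holds: 2·∑_{g=2}^{n} C(2n−1, 2g−3) · (1 − 2^{−2g})·B_{2g}/(g(g−1)) = (4^{−n} − 4^{−1})/n, where C(·,·) denotes the binomial coefficient. (For n = 1 the left-hand sum is empty and both sides are 0.) This identity expresses that the sequence F_g = (1 − 2^{−2g})·B_{2g}/(g(g−1)) solves the degree-one constraint imposed by the Toda equation on the zero-point Θ-Gromov–Witten free energies of P¹. -/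
open Finset

lemma evalB (M : ℕ) (x : ℚ) :
    (Polynomial.bernoulli M).eval x
      = ∑ k ∈ range (M + 1), (M.choose k : ℚ) * bernoulli k * x ^ (M - k) := by
  rw [Polynomial.bernoulli, Polynomial.eval_finset_sum]
  refine Finset.sum_congr rfl fun k _ => ?_
  rw [Polynomial.eval_monomial]
  ring

lemma sumA (M : ℕ) (x : ℚ) :
    ∑ k ∈ range (M + 1 + 1), ((M + 1).choose k : ℚ) * (((M : ℚ) + 1) - k) * bernoulli k * x ^ (M + 1 - k)
      = ((M : ℚ) + 1) * x * (Polynomial.bernoulli M).eval x := by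
  rw [Finset.sum_range_succ]
  have hz : ((M + 1).choose (M+1) : ℚ) * (((M : ℚ) + 1) - (M+1 : ℕ)) * bernoulli (M+1) * x ^ (M + 1 - (M+1)) = 0 := by
    push_cast; ring
  rw [hz, add_zero, evalB, Finset.mul_sum]
  refine Finset.sum_congr rfl fun k hk => ?_
  have hk' : k ≤ M := Finset.mem_range_succ_iff.mp hk
  have hpow : x ^ (M + 1 - k) = x * x ^ (M - k) := by
    rw [← pow_succ']
    congr 1
    omega
  have hchN : (M+1).choose k * (M + 1 - k) = (M+1) * M.choose k := by
    rw [← Nat.choose_succ_right_eq]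
    exact (Nat.add_one_mul_choose_eq M k).symm
  have hch : ((M+1).choose k : ℚ) * (((M : ℚ) + 1) - k) = ((M : ℚ) + 1) * (M.choose k : ℚ) := by
    have h2 : (((M+1).choose k * (M + 1 - k) : ℕ) : ℚ) = (((M+1) * M.choose k : ℕ) : ℚ) := by
      exact_mod_cast hchN
    push_cast [Nat.cast_sub (by omega : k ≤ M + 1)] at h2
    linarith [h2]
  rw [hpow]
  linear_combination (bernoulli k * x * x ^ (M - k)) * hch

lemma sumS (M : ℕ) (x : ℚ) :
    ∑ k ∈ range (M + 1 + 1), ((M + 1).choose k : ℚ) * ((k : ℚ) - 1) * bernoulli k * x ^ (M + 1 - k)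
      = (M : ℚ) * (Polynomial.bernoulli (M + 1)).eval x
        - ((M : ℚ) + 1) * x * (Polynomial.bernoulli M).eval x := by
  have hsplit : ∀ k ∈ range (M + 1 + 1),
      ((M + 1).choose k : ℚ) * ((k : ℚ) - 1) * bernoulli k * x ^ (M + 1 - k)
        = (M : ℚ) * (((M + 1).choose k : ℚ) * bernoulli k * x ^ (M + 1 - k))
          - ((M + 1).choose k : ℚ) * (((M : ℚ) + 1) - k) * bernoulli k * x ^ (M + 1 - k) := by
    intro k _; ring
  rw [Finset.sum_congr rfl hsplit, Finset.sum_sub_distrib, ← Finset.mul_sum, sumA]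
  congr 2
  exact (evalB (M + 1) x).symm

lemma Krange (n : ℕ) (hn : 1 ≤ n) :
    ∑ k ∈ range (2*n + 1), ((2*n + 1 + 1).choose k : ℚ) * ((k : ℚ) - 1) * (1 - ((2:ℚ)^k)⁻¹) * bernoulli k
      = ((2:ℚ)^(2*n + 2))⁻¹ * (2*(n:ℚ) + 2) * (2*(n:ℚ) + 1) := by
  have hodd : bernoulli' (2*n+1) = 0 := bernoulli'_eq_zero_of_odd ⟨n, by ring⟩ (by omega)
  have hoddb : bernoulli (2*n+1) = 0 := by
    rw [bernoulli_eq_bernoulli'_of_ne_one (by omega), hodd]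
  have hB' : bernoulli' (2*n+1+1) = bernoulli (2*n+1+1) :=
    (bernoulli_eq_bernoulli'_of_ne_one (by omega)).symm
  have e11 : (Polynomial.bernoulli (2*n+1)).eval 1 = 0 := by
    rw [Polynomial.bernoulli_eval_one, hodd]
  have e12 : (Polynomial.bernoulli (2*n+1)).eval 2 = 2*(n:ℚ)+1 := by
    rw [show (2:ℚ) = 1 + 1 by norm_num, Polynomial.bernoulli_eval_one_add, e11]
    simp only [one_pow, zero_add, mul_one]
    push_cast; ring
  have e21 : (Polynomial.bernoulli (2*n+1+1)).eval 1 = bernoulli (2*n+1+1) := by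
    rw [Polynomial.bernoulli_eval_one, hB']
  have e22 : (Polynomial.bernoulli (2*n+1+1)).eval 2 = bernoulli (2*n+1+1) + (2*(n:ℚ)+2) := by
    rw [show (2:ℚ) = 1 + 1 by norm_num, Polynomial.bernoulli_eval_one_add, e21]
    simp only [one_pow, mul_one]
    push_cast; ring
  have hA := sumS (2*n+1) 1
  rw [e21, e11] at hA
  have hB := sumS (2*n+1) 2
  rw [e22, e12] at hB
  have hT : ∑ k ∈ range (2*n+1+1+1), ((2*n+1+1).choose k : ℚ) * ((k:ℚ)-1) * (1 - ((2:ℚ)^k)⁻¹) * bernoulli k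
      = (∑ k ∈ range (2*n+1+1+1), ((2*n+1+1).choose k : ℚ) * ((k:ℚ)-1) * bernoulli k * (1:ℚ)^(2*n+1+1-k))
        - ((2:ℚ)^(2*n+2))⁻¹ * ∑ k ∈ range (2*n+1+1+1), ((2*n+1+1).choose k : ℚ) * ((k:ℚ)-1) * bernoulli k * (2:ℚ)^(2*n+1+1-k) := by
    rw [Finset.mul_sum, ← Finset.sum_sub_distrib]
    refine Finset.sum_congr rfl fun k hk => ?_
    have hk' : k ≤ 2*n+1+1 := by have := Finset.mem_range.mp hk; omega
    have h2 : ((2:ℚ)^(2*n+2))⁻¹ * (2:ℚ)^(2*n+1+1-k) = ((2:ℚ)^k)⁻¹ := by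
      rw [pow_sub₀ (2:ℚ) (by norm_num) hk']
      have h4 : (2:ℚ)^(2*n+1+1) = (2:ℚ)^(2*n+2) := by norm_num
      rw [h4]
      field_simp
    rw [one_pow]
    linear_combination (((2*n+1+1).choose k : ℚ) * ((k:ℚ)-1) * bernoulli k) * h2
  rw [hA, hB, Finset.sum_range_succ, Finset.sum_range_succ] at hT
  simp only [Nat.choose_self, hoddb, mul_zero, zero_mul, add_zero, Nat.cast_one] at hT
  push_cast at hT ⊢
  linear_combination hT

lemma KIcc (n : ℕ) (hn : 1 ≤ n) :
    ∑ g ∈ Icc 1 n, ((2*n + 1 + 1).choose (2*g) : ℚ) * (((2*g : ℕ) : ℚ) - 1) * (1 - ((2:ℚ)^(2*g))⁻¹) * bernoulli (2*g)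
      = ((2:ℚ)^(2*n + 2))⁻¹ * (2*(n:ℚ) + 2) * (2*(n:ℚ) + 1) := by
  rw [← Krange n hn]
  have himg : ∑ k ∈ (Icc 1 n).image (fun g => 2*g),
        ((2*n + 1 + 1).choose k : ℚ) * ((k : ℚ) - 1) * (1 - ((2:ℚ)^k)⁻¹) * bernoulli k
      = ∑ g ∈ Icc 1 n, ((2*n + 1 + 1).choose (2*g) : ℚ) * (((2*g : ℕ) : ℚ) - 1) * (1 - ((2:ℚ)^(2*g))⁻¹) * bernoulli (2*g) :=
    Finset.sum_image (by intro a _ b _ h; beta_reduce at h; omega)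
  rw [← himg]
  apply Finset.sum_subset
  · intro k hk
    simp only [Finset.mem_image, Finset.mem_Icc] at hk
    obtain ⟨g, ⟨h1, h2⟩, rfl⟩ := hk
    simp only [Finset.mem_range]
    omega
  · intro k hk hk'
    have hcases : k = 0 ∨ k = 1 ∨ (k % 2 = 1 ∧ 2 ≤ k) := by
      by_contra h
      push_neg at h
      apply hk'
      simp only [Finset.mem_image, Finset.mem_Icc]
      have := Finset.mem_range.mp hk
      exact ⟨k / 2, by omega, by omega⟩
    rcases hcases with rfl | rfl | ⟨h1, h2⟩
    · norm_num
    · norm_num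
    · have hb : bernoulli k = 0 := by
        rw [bernoulli_eq_bernoulli'_of_ne_one (by omega)]
        exact bernoulli'_eq_zero_of_odd (Nat.odd_iff.mpr h1) (by omega)
      simp [hb]

lemma chainQ (m a : ℕ) :
    ((m+3).choose (a+3) : ℚ) * (((a:ℚ)+3) * ((a:ℚ)+2) * ((a:ℚ)+1))
      = (m.choose a : ℚ) * (((m:ℚ)+3) * ((m:ℚ)+2) * ((m:ℚ)+1)) := by
  have h1 : ((m:ℚ)+1) * (m.choose a : ℚ) = ((m+1).choose (a+1) : ℚ) * ((a:ℚ)+1) := by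
    have := Nat.add_one_mul_choose_eq m a
    have h := congrArg (Nat.cast : ℕ → ℚ) this
    push_cast at h
    linarith
  have h2 : ((m:ℚ)+2) * ((m+1).choose (a+1) : ℚ) = ((m+2).choose (a+2) : ℚ) * ((a:ℚ)+2) := by
    have := Nat.add_one_mul_choose_eq (m+1) (a+1)
    have h := congrArg (Nat.cast : ℕ → ℚ) this
    push_cast at h
    linarith
  have h3 : ((m:ℚ)+3) * ((m+2).choose (a+2) : ℚ) = ((m+3).choose (a+3) : ℚ) * ((a:ℚ)+3) := by
    have := Nat.add_one_mul_choose_eq (m+2) (a+2)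
    have h := congrArg (Nat.cast : ℕ → ℚ) this
    push_cast at h
    linarith
  linear_combination (-((a:ℚ)+2) * ((a:ℚ)+1)) * h3 - (((m:ℚ)+3) * ((a:ℚ)+1)) * h2
    - (((m:ℚ)+3) * ((m:ℚ)+2)) * h1

/-- For every integer `n ≥ 1`,
`2·∑_{g=2}^{n} C(2n−1, 2g−3)·(1 − 2^{−2g})·B_{2g}/(g(g−1)) = (4^{−n} − 4^{−1})/n`
as rational numbers, where `B_{2g}` is the `2g`-th Bernoulli number. -/
theorem theta_toda_degree_one_constraint (n : ℕ) (hn : 1 ≤ n) :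
    2 * ∑ g ∈ Finset.Icc 2 n,
        ((2 * n - 1).choose (2 * g - 3) : ℚ) * (1 - (2 : ℚ) ^ (-(2 * (g : ℤ))))
          * (bernoulli (2 * g)) / ((g : ℚ) * ((g : ℚ) - 1))
      = ((4 : ℚ) ^ (-(n : ℤ)) - (4 : ℚ) ^ (-1 : ℤ)) / n := by
  have hterm : ∀ g ∈ Finset.Icc 2 n,
      ((2 * n - 1).choose (2 * g - 3) : ℚ) * (1 - (2 : ℚ) ^ (-(2 * (g : ℤ))))
          * (bernoulli (2 * g)) / ((g : ℚ) * ((g : ℚ) - 1))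
        = (2 / ((n:ℚ) * (2*(n:ℚ)+2) * (2*(n:ℚ)+1))) *
            (((2*n + 1 + 1).choose (2*g) : ℚ) * (((2*g : ℕ) : ℚ) - 1)
              * (1 - ((2:ℚ)^(2*g))⁻¹) * bernoulli (2*g)) := by
    intro g hg
    rw [Finset.mem_Icc] at hg
    obtain ⟨hg2, hgn⟩ := hg
    rw [show -(2 * (g:ℤ)) = -((2*g : ℕ) : ℤ) by push_cast; ring, zpow_neg, zpow_natCast]
    obtain ⟨d, rfl⟩ : ∃ d, g = d + 2 := ⟨g - 2, by omega⟩
    obtain ⟨e, rfl⟩ : ∃ e, n = e + 2 := ⟨n - 2, by omega⟩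
    rw [show 2*(e+2) - 1 = 2*e+3 by omega, show 2*(d+2) - 3 = 2*d+1 by omega,
      show 2*(e+2)+1+1 = 2*e+3+3 by omega, show 2*(d+2) = 2*d+1+3 by omega]
    have hch := chainQ (2*e+3) (2*d+1)
    push_cast at hch
    have hcoef : (((2*e+3).choose (2*d+1) : ℚ)) * ((2*(e:ℚ)+6) * (2*(e:ℚ)+5) * ((e:ℚ)+2))
        = ((2*e+3+3).choose (2*d+1+3) : ℚ) * (2*(d:ℚ)+3) * (2 * ((d:ℚ)+2) * ((d:ℚ)+1)) := by
      linear_combination (-1/2 : ℚ) * hch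
    have h1 : ((d:ℚ)+2) ≠ 0 := by positivity
    have h2 : ((d:ℚ)+1) ≠ 0 := by positivity
    have h3 : ((e:ℚ)+2) ≠ 0 := by positivity
    have h4 : (2*(e:ℚ)+6) ≠ 0 := by positivity
    have h5 : (2*(e:ℚ)+5) ≠ 0 := by positivity
    obtain ⟨Y, hY⟩ : ∃ Y : ℚ, (1 - ((2:ℚ)^(2*d+1+3))⁻¹) = Y := ⟨_, rfl⟩
    rw [hY]
    push_cast
    have hD : ((d:ℚ) + 2) * ((d:ℚ) + 2 - 1) ≠ 0 := by
      have h' : ((d:ℚ) + 2) * ((d:ℚ) + 2 - 1) = ((d:ℚ)+2) * ((d:ℚ)+1) := by ring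
      rw [h']
      positivity
    have hP : ((e:ℚ)+2) * (2 * ((e:ℚ)+2) + 2) * (2 * ((e:ℚ)+2) + 1) ≠ 0 := by positivity
    rw [div_eq_iff hD, div_mul_eq_mul_div, div_mul_eq_mul_div, eq_div_iff hP]
    linear_combination (Y * bernoulli (2*d+1+3)) * hcoef
  rw [Finset.sum_congr rfl hterm, ← Finset.mul_sum]
  have hIoc : Finset.Icc 2 n = Finset.Ioc 1 n := by
    ext x
    simp only [Finset.mem_Icc, Finset.mem_Ioc]
    omega
  have hsplit : ∑ g ∈ Finset.Icc 1 n,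
        ((2*n + 1 + 1).choose (2*g) : ℚ) * (((2*g : ℕ) : ℚ) - 1)
          * (1 - ((2:ℚ)^(2*g))⁻¹) * bernoulli (2*g)
      = ((2*n + 1 + 1).choose 2 : ℚ) * (((2 : ℕ) : ℚ) - 1)
          * (1 - ((2:ℚ)^2)⁻¹) * bernoulli 2
        + ∑ g ∈ Finset.Icc 2 n,
            ((2*n + 1 + 1).choose (2*g) : ℚ) * (((2*g : ℕ) : ℚ) - 1)
              * (1 - ((2:ℚ)^(2*g))⁻¹) * bernoulli (2*g) := by
    rw [Finset.Icc_eq_cons_Ioc hn, Finset.sum_cons, hIoc]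
    try norm_num
  have hK := KIcc n hn
  rw [hsplit] at hK
  have hb2 : bernoulli 2 = 1/6 := by
    rw [bernoulli_eq_bernoulli'_of_ne_one (by norm_num), bernoulli'_two]
  have hc2 : ((2*n+1+1).choose 2 : ℚ) = (2*(n:ℚ)+2) * (2*(n:ℚ)+1) / 2 := by
    have h := Nat.add_one_mul_choose_eq (2*n+1) 1
    rw [Nat.choose_one_right] at h
    have h' := congrArg (Nat.cast : ℕ → ℚ) h
    push_cast at h'
    linarith
  rw [hb2, hc2] at hK
  have hSum : ∑ g ∈ Finset.Icc 2 n,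
        ((2*n + 1 + 1).choose (2*g) : ℚ) * (((2*g : ℕ) : ℚ) - 1)
          * (1 - ((2:ℚ)^(2*g))⁻¹) * bernoulli (2*g)
      = ((2:ℚ)^(2*n + 2))⁻¹ * (2*(n:ℚ) + 2) * (2*(n:ℚ) + 1)
        - (2*(n:ℚ)+2) * (2*(n:ℚ)+1) / 2 * (((2 : ℕ) : ℚ) - 1) * (1 - ((2:ℚ)^2)⁻¹) * (1/6) := by
    linarith [hK]
  rw [hSum]
  have hp : (2:ℚ)^(2*n+2) = 4 * (4:ℚ)^n := by
    rw [show 2*n+2 = 2*(n+1) by omega, pow_mul, pow_succ]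
    norm_num [mul_comm]
  rw [show -(n:ℤ) = -((n:ℕ):ℤ) by norm_num, zpow_neg, zpow_natCast,
    show ((4:ℚ)^(-1:ℤ)) = 1/4 by norm_num]
  have h4n : ((4:ℚ)^n) ≠ 0 := by positivity
  have hnn : ((n:ℚ)) ≠ 0 := by
    simp only [ne_eq, Nat.cast_eq_zero]
    omega
  have hn1 : (2*(n:ℚ)+2) ≠ 0 := by positivity
  have hn2 : (2*(n:ℚ)+1) ≠ 0 := by positivity
  push_cast
  rw [hp]
  field_simp
  ring
end

section
/- Let N ≥ 1 be an integer and let f : ℝ → ℝ be continuous. Then ∫_{[−2,2]^N} ∏_{1≤i<j≤N}(x_i − x_j)² · ∏_{i=1}^{N} f(x_i) dx₁⋯dx_N = N! · det( M ), where M is the N×N matrix with entries M_{ij} = ∫_{−2}^{2} t^{i+j} f(t) dt for 0 ≤ i, j ≤ N−1. (Andreief/Heine identity relating the squared-Vandermonde eigenvalue integral to the Hankel determinant of moments; this underlies the identification of the matrix-integral partition function with ∏ h_j².) -/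
open MeasureTheory

section AndreiefAux

open Finset Equiv

private lemma pi_cube_integral_prod (N : ℕ) (g : Fin N → ℝ → ℝ) :
    ∫ x in (Set.univ.pi (fun _ => Set.Icc (-2 : ℝ) 2) : Set (Fin N → ℝ)),
        ∏ i, g i (x i)
      = ∏ i, ∫ t in Set.Icc (-2 : ℝ) 2, g i t := by
  have hmS : MeasurableSet (Set.univ.pi (fun _ : Fin N => Set.Icc (-2 : ℝ) 2)) :=
    MeasurableSet.univ_pi fun _ => measurableSet_Icc
  rw [← integral_indicator hmS]
  have h : ∀ x : Fin N → ℝ,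
      (Set.univ.pi (fun _ : Fin N => Set.Icc (-2 : ℝ) 2)).indicator
        (fun x : Fin N → ℝ => ∏ i, g i (x i)) x
      = ∏ i, (Set.Icc (-2 : ℝ) 2).indicator (g i) (x i) := by
    intro x
    by_cases hx : x ∈ Set.univ.pi (fun _ : Fin N => Set.Icc (-2 : ℝ) 2)
    · rw [Set.indicator_of_mem hx]
      exact Finset.prod_congr rfl fun i _ =>
        (Set.indicator_of_mem (hx i trivial) _).symm
    · rw [Set.indicator_of_notMem hx]
      rw [Set.mem_univ_pi] at hx
      push_neg at hx
      obtain ⟨i, hi⟩ := hx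
      exact (Finset.prod_eq_zero (Finset.mem_univ i)
        (Set.indicator_of_notMem hi _)).symm
  simp_rw [h]
  rw [MeasureTheory.integral_fintype_prod_volume_eq_prod]
  exact Finset.prod_congr rfl fun i _ => integral_indicator measurableSet_Icc

private lemma perm_sum_det (N : ℕ) (A : ℕ → ℝ) :
    ∑ p : Equiv.Perm (Fin N) × Equiv.Perm (Fin N),
        (((Equiv.Perm.sign p.1 : ℤ) : ℝ) * ((Equiv.Perm.sign p.2 : ℤ) : ℝ)) *
          ∏ i : Fin N, A (((p.1⁻¹ i : Fin N) : ℕ) + ((p.2⁻¹ i : Fin N) : ℕ))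
      = (N.factorial : ℝ) *
        (Matrix.of fun i j : Fin N => A ((i : ℕ) + (j : ℕ))).det := by
  rw [Fintype.sum_prod_type]
  have inner : ∀ σ : Equiv.Perm (Fin N),
      ∑ τ : Equiv.Perm (Fin N),
        (((Equiv.Perm.sign σ : ℤ) : ℝ) * ((Equiv.Perm.sign τ : ℤ) : ℝ)) *
          ∏ i : Fin N, A (((σ⁻¹ i : Fin N) : ℕ) + ((τ⁻¹ i : Fin N) : ℕ))
      = (Matrix.of fun i j : Fin N => A ((i : ℕ) + (j : ℕ))).det := by
    intro σ
    rw [← Equiv.sum_comp (Equiv.mulLeft σ) (fun τ =>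
      (((Equiv.Perm.sign σ : ℤ) : ℝ) * ((Equiv.Perm.sign τ : ℤ) : ℝ)) *
        ∏ i : Fin N, A (((σ⁻¹ i : Fin N) : ℕ) + ((τ⁻¹ i : Fin N) : ℕ)))]
    rw [Matrix.det_apply']
    rw [← Equiv.sum_comp (Equiv.inv (Equiv.Perm (Fin N))) (fun π =>
      (((Equiv.Perm.sign π : ℤ) : ℝ) *
        ∏ i : Fin N, (Matrix.of fun i j : Fin N => A ((i : ℕ) + (j : ℕ))) (π i) i))]
    refine Finset.sum_congr rfl fun π _ => ?_
    simp only [Equiv.coe_mulLeft, Equiv.inv_apply, Equiv.Perm.sign_mul,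
      Equiv.Perm.sign_inv, Matrix.of_apply, mul_inv_rev, Units.val_mul,
      Int.cast_mul, Equiv.Perm.coe_mul, Function.comp_apply]
    have hsq : ((Equiv.Perm.sign σ : ℤ) : ℝ) * ((Equiv.Perm.sign σ : ℤ) : ℝ) = 1 := by
      rcases Int.units_eq_one_or (Equiv.Perm.sign σ) with h | h <;> rw [h] <;> norm_num
    have hprod : (∏ i : Fin N, A (((σ⁻¹ i : Fin N) : ℕ) + ((π⁻¹ (σ⁻¹ i) : Fin N) : ℕ)))
        = ∏ i : Fin N, A ((i : ℕ) + ((π⁻¹ i : Fin N) : ℕ)) :=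
      Equiv.prod_comp (σ⁻¹ : Equiv.Perm (Fin N))
        (fun j => A ((j : ℕ) + ((π⁻¹ j : Fin N) : ℕ)))
    calc ((Equiv.Perm.sign σ : ℤ) : ℝ) *
            (((Equiv.Perm.sign σ : ℤ) : ℝ) * ((Equiv.Perm.sign π : ℤ) : ℝ)) *
          ∏ i : Fin N, A (((σ⁻¹ i : Fin N) : ℕ) + ((π⁻¹ (σ⁻¹ i) : Fin N) : ℕ))
        = ((Equiv.Perm.sign π : ℤ) : ℝ) *
            ∏ i : Fin N, A ((i : ℕ) + ((π⁻¹ i : Fin N) : ℕ)) := by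
          rw [hprod, ← mul_assoc, hsq, one_mul]
      _ = ((Equiv.Perm.sign π : ℤ) : ℝ) *
            ∏ i : Fin N, A (((π⁻¹ i : Fin N) : ℕ) + (i : ℕ)) := by
          simp_rw [add_comm]
  simp_rw [inner]
  rw [Finset.sum_const, Finset.card_univ, Fintype.card_perm, Fintype.card_fin,
    nsmul_eq_mul]

private lemma integrand_expand (N : ℕ) (f : ℝ → ℝ) (x : Fin N → ℝ) :
    (∏ i : Fin N, ∏ j ∈ Finset.Ioi i, (x i - x j) ^ 2) * ∏ i : Fin N, f (x i)
      = ∑ p : Equiv.Perm (Fin N) × Equiv.Perm (Fin N),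
          (((Equiv.Perm.sign p.1 : ℤ) : ℝ) * ((Equiv.Perm.sign p.2 : ℤ) : ℝ)) *
            ∏ i : Fin N,
              (x i ^ ((p.1⁻¹ i : Fin N) : ℕ) * (x i ^ ((p.2⁻¹ i : Fin N) : ℕ) * f (x i))) := by
  have hv : (∏ i : Fin N, ∏ j ∈ Finset.Ioi i, (x i - x j) ^ 2)
      = (Matrix.vandermonde x).det * (Matrix.vandermonde x).det := by
    rw [Matrix.det_vandermonde, ← sq, ← Finset.prod_pow]
    refine Finset.prod_congr rfl fun i _ => ?_
    rw [← Finset.prod_pow]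
    exact Finset.prod_congr rfl fun j _ => by ring
  rw [hv, Matrix.det_apply', Finset.sum_mul_sum, Finset.sum_mul]
  rw [Fintype.sum_prod_type]
  refine Finset.sum_congr rfl fun σ _ => ?_
  rw [Finset.sum_mul]
  refine Finset.sum_congr rfl fun τ _ => ?_
  have e1 : (∏ i : Fin N, Matrix.vandermonde x (σ i) i)
      = ∏ i : Fin N, x i ^ ((σ⁻¹ i : Fin N) : ℕ) := by
    rw [← Equiv.prod_comp σ (fun i => x i ^ ((σ⁻¹ i : Fin N) : ℕ))]
    simp [Matrix.vandermonde]
  have e2 : (∏ i : Fin N, Matrix.vandermonde x (τ i) i)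
      = ∏ i : Fin N, x i ^ ((τ⁻¹ i : Fin N) : ℕ) := by
    rw [← Equiv.prod_comp τ (fun i => x i ^ ((τ⁻¹ i : Fin N) : ℕ))]
    simp [Matrix.vandermonde]
  rw [e1, e2]
  simp_rw [Finset.prod_mul_distrib]
  ring

end AndreiefAux

/-- Andreief/Heine identity: for `N ≥ 1` and continuous
`f : ℝ → ℝ`,
`∫_{[−2,2]^N} ∏_{i<j}(x_i − x_j)² · ∏_i f(x_i) dx = N! · det(M)` where
`M_{ij} = ∫_{−2}^{2} t^{i+j} f(t) dt`, `0 ≤ i,j ≤ N−1`. -/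
theorem andreief_identity (N : ℕ) (hN : 1 ≤ N) (f : ℝ → ℝ) (hf : Continuous f) :
    ∫ x in (Set.univ.pi (fun _ => Set.Icc (-2 : ℝ) 2) : Set (Fin N → ℝ)),
        (∏ i : Fin N, ∏ j ∈ Finset.Ioi i, (x i - x j) ^ 2) * ∏ i : Fin N, f (x i)
      = (N.factorial : ℝ) *
        (Matrix.of fun i j : Fin N =>
          ∫ t in (-2 : ℝ)..2, t ^ ((i : ℕ) + (j : ℕ)) * f t).det := by
  have hM : (Matrix.of fun i j : Fin N =>
      ∫ t in (-2 : ℝ)..2, t ^ ((i : ℕ) + (j : ℕ)) * f t)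
      = Matrix.of fun i j : Fin N =>
          ∫ t in Set.Icc (-2 : ℝ) 2, t ^ ((i : ℕ) + (j : ℕ)) * f t := by
    ext i j
    simp only [Matrix.of_apply]
    rw [intervalIntegral.integral_of_le (by norm_num : (-2 : ℝ) ≤ 2),
      ← MeasureTheory.integral_Icc_eq_integral_Ioc]
  rw [hM]
  simp_rw [integrand_expand N f]
  have hK : IsCompact (Set.univ.pi (fun _ : Fin N => Set.Icc (-2 : ℝ) 2)) :=
    isCompact_univ_pi fun _ => isCompact_Icc
  rw [integral_finset_sum]
  swap
  · intro p _
    apply ContinuousOn.integrableOn_compact hK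
    apply Continuous.continuousOn
    fun_prop
  have hterm : ∀ p : Equiv.Perm (Fin N) × Equiv.Perm (Fin N),
      (∫ x in (Set.univ.pi (fun _ => Set.Icc (-2 : ℝ) 2) : Set (Fin N → ℝ)),
          (((Equiv.Perm.sign p.1 : ℤ) : ℝ) * ((Equiv.Perm.sign p.2 : ℤ) : ℝ)) *
            ∏ i : Fin N,
              (x i ^ ((p.1⁻¹ i : Fin N) : ℕ) * (x i ^ ((p.2⁻¹ i : Fin N) : ℕ) * f (x i))))
      = (((Equiv.Perm.sign p.1 : ℤ) : ℝ) * ((Equiv.Perm.sign p.2 : ℤ) : ℝ)) *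
          ∏ i : Fin N, ∫ t in Set.Icc (-2 : ℝ) 2,
            t ^ (((p.1⁻¹ i : Fin N) : ℕ) + ((p.2⁻¹ i : Fin N) : ℕ)) * f t := by
    intro p
    rw [MeasureTheory.integral_const_mul,
      pi_cube_integral_prod N (fun i t =>
        t ^ ((p.1⁻¹ i : Fin N) : ℕ) * (t ^ ((p.2⁻¹ i : Fin N) : ℕ) * f t))]
    congr 1
    refine Finset.prod_congr rfl fun i _ => ?_
    refine integral_congr_ae (Filter.Eventually.of_forall fun t => ?_)
    simp only []
    rw [← mul_assoc, ← pow_add]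
  simp_rw [hterm]
  exact perm_sum_det N fun k => ∫ t in Set.Icc (-2 : ℝ) 2, t ^ k * f t
end

section
/- Let w : ℝ → ℝ be continuous. For each integer j ≥ 0 and s ∈ ℝ set m_j(s) = ∫_{−2}^{2} t^j e^{st} w(t) dt, and for N ≥ 1 set D_N(s) = det( m_{i+j}(s) )_{0≤i,j≤N−1}, with D₀ ≡ 1. Then each D_N is twice differentiable in s and for every N ≥ 1 and every s ∈ ℝ, D_N″(s)·D_N(s) − (D_N′(s))² = D_{N+1}(s)·D_{N−1}(s). Equivalently, wherever D_N ≠ 0, ∂²_s log D_N(s) = D_{N+1}(s)·D_{N−1}(s)/D_N(s)². (The Toda equation for the Hankel determinants of the exponentially deformed moments of a weight on [−2,2], which by the Andreief identity are the partition functions Z(N) of the Legendre-type matrix ensemble.) -/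
open Matrix Finset

/-- Derivative of determinant of a parameter-dependent matrix, column form. -/
lemma hasDerivAt_det {n : ℕ} (M : ℝ → Matrix (Fin n) (Fin n) ℝ)
    (M' : Matrix (Fin n) (Fin n) ℝ) (s : ℝ)
    (h : ∀ i j, HasDerivAt (fun u => M u i j) (M' i j) s) :
    HasDerivAt (fun u => (M u).det)
      (∑ k, ((M s).updateCol k (fun i => M' i k)).det) s := by
  simp only [Matrix.det_apply']
  have key : ∀ σ : Equiv.Perm (Fin n),
      HasDerivAt (fun u => (Equiv.Perm.sign σ : ℝ) * ∏ i, M u (σ i) i)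
        ((Equiv.Perm.sign σ : ℝ) *
          ∑ k, (∏ j ∈ Finset.univ.erase k, M s (σ j) j) * M' (σ k) k) s := by
    intro σ
    have := HasDerivAt.finset_prod (u := Finset.univ)
      (f := fun i u => M u (σ i) i) (f' := fun i => M' (σ i) i) (x := s)
      (fun i _ => h (σ i) i)
    simpa [smul_eq_mul] using this.const_mul (Equiv.Perm.sign σ : ℝ)
  have := HasDerivAt.fun_sum (u := Finset.univ) (fun σ _ => key σ)
  refine this.congr_deriv (Eq.symm ?_)
  rw [Finset.sum_comm]
  refine Finset.sum_congr rfl fun σ _ => ?_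
  rw [Finset.mul_sum]
  refine Finset.sum_congr rfl fun x _ => ?_
  have hprod : (∏ i, (M s).updateCol x (fun r => M' r x) (σ i) i)
      = ∏ i, Function.update (fun i => M s (σ i) i) x (M' (σ x) x) i := by
    refine Finset.prod_congr rfl fun i _ => ?_
    rw [Matrix.updateCol_apply, Function.update_apply]
    by_cases hi : i = x <;> simp [hi]
  rw [hprod, Finset.prod_update_of_mem (Finset.mem_univ x)]
  rw [Finset.sdiff_singleton_eq_erase]; ring

noncomputable def mom (w : ℝ → ℝ) (j : ℕ) (s : ℝ) : ℝ :=
  ∫ t in (-2 : ℝ)..2, t ^ j * Real.exp (s * t) * w t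

lemma hasDerivAt_mom (w : ℝ → ℝ) (hw : Continuous w) (j : ℕ) (s : ℝ) :
    HasDerivAt (mom w j) (mom w (j + 1) s) s := by
  have hcont : ∀ (k : ℕ) (x : ℝ), Continuous fun t : ℝ => t ^ k * Real.exp (x * t) * w t := by
    intro k x
    exact ((continuous_pow k).mul ((continuous_const.mul continuous_id).rexp)).mul hw
  have hbc : Continuous fun t : ℝ =>
      (2 : ℝ) ^ (j + 1) * Real.exp ((|s| + 1) * 2) * |w t| := by
    exact continuous_const.mul hw.abs
  have := intervalIntegral.hasDerivAt_integral_of_dominated_loc_of_deriv_le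
    (F := fun x t => t ^ j * Real.exp (x * t) * w t)
    (F' := fun x t => t ^ (j + 1) * Real.exp (x * t) * w t)
    (bound := fun t => (2 : ℝ) ^ (j + 1) * Real.exp ((|s| + 1) * 2) * |w t|)
    (μ := MeasureTheory.volume) (a := (-2 : ℝ)) (b := 2) (x₀ := s)
    (s := Metric.ball s 1) (Metric.ball_mem_nhds s one_pos)
    (Filter.Eventually.of_forall fun x => (hcont j x).aestronglyMeasurable)
    ((hcont j s).intervalIntegrable _ _)
    ((hcont (j + 1) s).aestronglyMeasurable)
    ?_
    (hbc.intervalIntegrable _ _)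
    ?_
  · exact this.2
  · refine Filter.Eventually.of_forall fun t ht x hx => ?_
    have ht2 : |t| ≤ 2 := by
      rw [Set.uIoc_of_le (by norm_num : (-2:ℝ) ≤ 2)] at ht
      rw [abs_le]; exact ⟨le_of_lt ht.1, ht.2⟩
    have hx1 : |x| ≤ |s| + 1 := by
      have := mem_ball_iff_norm.mp hx
      calc |x| = |s + (x - s)| := by ring_nf
        _ ≤ |s| + |x - s| := abs_add_le _ _
        _ ≤ |s| + 1 := by simp [Real.norm_eq_abs] at this; linarith
    have h1 : |t ^ (j+1)| ≤ 2 ^ (j+1) := by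
      rw [abs_pow]
      exact pow_le_pow_left₀ (abs_nonneg t) ht2 _
    have h2 : Real.exp (x * t) ≤ Real.exp ((|s| + 1) * 2) := by
      apply Real.exp_le_exp.2
      calc x * t ≤ |x * t| := le_abs_self _
        _ = |x| * |t| := abs_mul _ _
        _ ≤ (|s| + 1) * 2 := by
            apply mul_le_mul hx1 ht2 (abs_nonneg t) (by positivity)
    rw [Real.norm_eq_abs, abs_mul, abs_mul, abs_of_pos (Real.exp_pos _)]
    apply mul_le_mul _ le_rfl (abs_nonneg _) (by positivity)
    exact mul_le_mul h1 h2 (Real.exp_pos _).le (by positivity)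
  · refine Filter.Eventually.of_forall fun t ht x hx => ?_
    have h1 : HasDerivAt (fun x : ℝ => x * t) t x := by
      simpa using (hasDerivAt_id x).mul_const t
    have h2 : HasDerivAt (fun x : ℝ => Real.exp (x * t)) (Real.exp (x * t) * t) x := h1.exp
    have h3 := (h2.const_mul (t ^ j)).mul_const (w t)
    refine h3.congr_deriv ?_
    ring

open Matrix Finset

variable {R : Type*} [CommRing R] {n : Type*} [Fintype n] [DecidableEq n]

lemma updateColumn_comm (M : Matrix n n R) {p q : n} (h : p ≠ q) (u v : n → R) :
    (M.updateCol p u).updateCol q v = (M.updateCol q v).updateCol p u := by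
  ext i j
  simp only [Matrix.updateCol_apply]
  rcases eq_or_ne j q with rfl | hjq
  · simp [h.symm]
  · simp [hjq]

lemma det_updateColumn_finset_sum (M : Matrix n n R) (q : n) {ι : Type*} (s : Finset ι)
    (f : ι → n → R) :
    det (M.updateCol q (∑ i ∈ s, f i)) = ∑ i ∈ s, det (M.updateCol q (f i)) := by
  classical
  induction s using Finset.induction_on with
  | empty =>
      simp only [Finset.sum_empty]
      exact Matrix.det_eq_zero_of_column_eq_zero q (fun i => by simp)
  | insert _ _ hns ih =>
      rw [Finset.sum_insert hns, Matrix.det_updateCol_add, ih, Finset.sum_insert hns]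

lemma det_updateColumn_expand (M : Matrix n n R) (q : n) (v : n → R) :
    det (M.updateCol q v) = ∑ i, v i * det (M.updateCol q (Pi.single i 1)) := by
  have hv : v = ∑ i, v i • (Pi.single i (1 : R) : n → R) := by
    funext k
    simp [Pi.single_apply, Finset.sum_ite_eq', mul_comm]
  conv_lhs => rw [hv]
  rw [det_updateColumn_finset_sum]
  refine Finset.sum_congr rfl fun i _ => ?_
  exact Matrix.det_updateCol_smul M q (v i) (Pi.single i 1)

section singles

variable (p q i j : n)

private def TwoS (p q i j : n) : Matrix n n R :=
  ((1 : Matrix n n R).updateCol p (Pi.single i 1)).updateCol q (Pi.single j 1)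

lemma twoS_apply (hpq : p ≠ q) (k c : n) :
    (TwoS (R := R) p q i j) k c
      = if c = q then (if k = j then 1 else 0)
        else if c = p then (if k = i then 1 else 0) else if k = c then 1 else 0 := by
  simp only [TwoS, Matrix.updateCol_apply, Pi.single_apply, Matrix.one_apply]

lemma twoS_det_1 (hpq : p ≠ q) (hip : i = p) (hjq : j = q) :
    (TwoS (R := R) p q i j).det = 1 := by
  have : (TwoS (R := R) p q i j) = 1 := by
    ext k c
    rw [twoS_apply _ _ _ _ hpq, Matrix.one_apply]
    rcases eq_or_ne c q with rfl | h1
    · simp [hjq]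
    · rcases eq_or_ne c p with rfl | h2
      · simp [hip, h1]
      · simp [h1, h2]
  rw [this, Matrix.det_one]

lemma twoS_det_swap (hpq : p ≠ q) (hiq : i = q) (hjp : j = p) :
    (TwoS (R := R) p q i j).det = -1 := by
  have : (TwoS (R := R) p q i j) = (1 : Matrix n n R).submatrix id (Equiv.swap p q) := by
    ext k c
    rw [twoS_apply _ _ _ _ hpq]
    simp only [Matrix.submatrix_apply, id_eq, Matrix.one_apply]
    rcases eq_or_ne c q with rfl | h1
    · simp [Equiv.swap_apply_right, hjp]
    · rcases eq_or_ne c p with rfl | h2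
      · simp [Equiv.swap_apply_left, hiq, h1]
      · simp [h1, h2, Equiv.swap_apply_of_ne_of_ne h2 h1]
  rw [this, Matrix.det_permute', Equiv.Perm.sign_swap hpq, Matrix.det_one]
  simp

lemma twoS_det_diag (hpq : p ≠ q) (hij : i = j) :
    (TwoS (R := R) p q i j).det = 0 := by
  refine Matrix.det_zero_of_column_eq hpq fun k => ?_
  rw [twoS_apply _ _ _ _ hpq, twoS_apply _ _ _ _ hpq]
  simp [hpq, Ne.symm hpq, hij]

lemma twoS_det_i_out (hpq : p ≠ q) (hip : i ≠ p) (hiq : i ≠ q) :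
    (TwoS (R := R) p q i j).det = 0 := by
  refine Matrix.det_zero_of_column_eq hip fun k => ?_
  rw [twoS_apply _ _ _ _ hpq, twoS_apply _ _ _ _ hpq]
  simp [hip, hiq, hpq, Ne.symm hpq]

lemma twoS_det_j_out (hpq : p ≠ q) (hjp : j ≠ p) (hjq : j ≠ q) :
    (TwoS (R := R) p q i j).det = 0 := by
  refine Matrix.det_zero_of_column_eq hjq fun k => ?_
  rw [twoS_apply _ _ _ _ hpq, twoS_apply _ _ _ _ hpq]
  simp [hjp, hjq]

lemma det_one_two_singles (hpq : p ≠ q) :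
    (TwoS (R := R) p q i j).det
      = (if i = p then (1:R) else 0) * (if j = q then 1 else 0)
        - (if i = q then (1:R) else 0) * (if j = p then 1 else 0) := by
  by_cases hip : i = p
  · have hiq : ¬ i = q := fun h => hpq (hip ▸ h)
    by_cases hjq : j = q
    · rw [twoS_det_1 _ _ _ _ hpq hip hjq]; simp [hip, hjq, hiq, Ne.symm hpq]
    · by_cases hjp : j = p
      · rw [twoS_det_diag _ _ _ _ hpq (hip.trans hjp.symm)]; simp [hiq, hjq]
      · rw [twoS_det_j_out _ _ _ _ hpq hjp hjq]; simp [hiq, hjq]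
  · by_cases hiq : i = q
    · by_cases hjp : j = p
      · rw [twoS_det_swap _ _ _ _ hpq hiq hjp]; simp [hip, hiq, hjp, hpq]
      · by_cases hjq : j = q
        · rw [twoS_det_diag _ _ _ _ hpq (hiq.trans hjq.symm)]; simp [hip, hjp]
        · rw [twoS_det_j_out _ _ _ _ hpq hjp hjq]; simp [hip, hjp]
    · rw [twoS_det_i_out _ _ _ _ hpq hip hiq]; simp [hip, hiq]

end singles

/-- Determinant of the identity with two columns replaced. -/
lemma det_one_updateColumn_updateColumn (p q : n) (hpq : p ≠ q) (u v : n → R) :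
    det (((1 : Matrix n n R).updateCol p u).updateCol q v)
      = u p * v q - u q * v p := by
  rw [det_updateColumn_expand]
  have : ∀ j', det (((1 : Matrix n n R).updateCol p u).updateCol q (Pi.single j' 1))
      = ∑ i', u i' * det (TwoS (R := R) p q i' j') := by
    intro j'
    rw [updateColumn_comm _ hpq, det_updateColumn_expand]
    refine Finset.sum_congr rfl fun i' _ => ?_
    rw [updateColumn_comm _ (Ne.symm hpq)]
    rfl
  simp_rw [this, det_one_two_singles _ _ _ _ hpq, Finset.mul_sum]
  rw [Finset.sum_comm]
  rw [Finset.sum_comm]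
  simp only [mul_ite, ite_mul, mul_one, mul_zero, one_mul, zero_mul, mul_sub,
    Finset.sum_sub_distrib, Finset.sum_ite_eq', Finset.mem_univ, if_true, Finset.sum_ite_irrel,
    Finset.sum_const_zero]
  ring
section Jacobi

open Matrix

variable {R : Type*} [CommRing R]

lemma det_updateColumn_single_last {k : ℕ} (B : Matrix (Fin (k+1)) (Fin (k+1)) R) :
    det (B.updateCol (Fin.last k) (Pi.single (Fin.last k) 1))
      = det (B.submatrix Fin.castSucc Fin.castSucc) := by
  rw [← Matrix.det_transpose, ← Matrix.updateRow_transpose]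
  have h := Matrix.adjugate_apply Bᵀ (Fin.last k) (Fin.last k)
  rw [← h, Matrix.adjugate_fin_succ_eq_det_submatrix, Fin.succAbove_last]
  have : (Bᵀ.submatrix Fin.castSucc Fin.castSucc) = (B.submatrix Fin.castSucc Fin.castSucc)ᵀ := by
    ext i j; rfl
  rw [this, Matrix.det_transpose]
  have h2 : ((Fin.last k : ℕ) + (Fin.last k : ℕ)) = 2 * k := by
    simp [Fin.val_last]; ring
  rw [h2, pow_mul]
  norm_num

/-- The key identity `det A * det C = det A * (det A * det inner)`. -/
lemma key_identity {n : ℕ} (A : Matrix (Fin (n+2)) (Fin (n+2)) R) :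
    A.det * ((A.submatrix (Fin.last (n+1)).succAbove (Fin.last (n+1)).succAbove).det *
        (A.submatrix (Fin.castSucc (Fin.last n)).succAbove (Fin.castSucc (Fin.last n)).succAbove).det
      - (A.submatrix (Fin.castSucc (Fin.last n)).succAbove (Fin.last (n+1)).succAbove).det *
        (A.submatrix (Fin.last (n+1)).succAbove (Fin.castSucc (Fin.last n)).succAbove).det)
    = A.det * (A.det *
        (A.submatrix (fun i : Fin n => i.castSucc.castSucc) (fun i => i.castSucc.castSucc)).det) := by
  set P : Fin (n+2) := Fin.castSucc (Fin.last n) with hP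
  set L : Fin (n+2) := Fin.last (n+1) with hL
  have hPL : P ≠ L := by
    simp [hP, hL, Fin.ext_iff]
  set C : Matrix (Fin (n+2)) (Fin (n+2)) R :=
    ((1 : Matrix (Fin (n+2)) (Fin (n+2)) R).updateCol P
      (fun i => adjugate A i P)).updateCol L (fun i => adjugate A i L) with hC
  have hdetC : C.det = (A.submatrix L.succAbove L.succAbove).det *
        (A.submatrix P.succAbove P.succAbove).det
      - (A.submatrix P.succAbove L.succAbove).det * (A.submatrix L.succAbove P.succAbove).det := by
    rw [hC, det_one_updateColumn_updateColumn P L hPL]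
    rw [Matrix.adjugate_fin_succ_eq_det_submatrix, Matrix.adjugate_fin_succ_eq_det_submatrix,
      Matrix.adjugate_fin_succ_eq_det_submatrix, Matrix.adjugate_fin_succ_eq_det_submatrix]
    have hPv : (P : ℕ) = n := rfl
    have hLv : (L : ℕ) = n + 1 := rfl
    rw [hPv, hLv]
    ring_nf
    rw [show n * 4 = 2 * (n * 2) by ring, pow_mul]
    norm_num
  have hadj : ∀ i j, (∑ k, A i k * adjugate A k j)
      = A.det * (1 : Matrix (Fin (n+2)) (Fin (n+2)) R) i j := by
    intro i j
    have := congrFun (congrFun (Matrix.mul_adjugate A) i) j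
    simpa [Matrix.mul_apply] using this
  have hAC : A * C = ((A.updateCol P
        ((A.det • (Pi.single P (1:R) : Fin (n+2) → R)))).updateCol L
        ((A.det • (Pi.single L (1:R) : Fin (n+2) → R)))) := by
    ext i j
    rw [Matrix.mul_apply]
    rcases eq_or_ne j L with rfl | hjL
    · have h1 : ∀ k, C k L = adjugate A k L := fun k => by
        simp [hC, Matrix.updateCol_apply]
      calc (∑ k, A i k * C k L) = ∑ k, A i k * adjugate A k L :=
            Finset.sum_congr rfl fun k _ => by rw [h1]
        _ = A.det * (1 : Matrix (Fin (n+2)) (Fin (n+2)) R) i L := hadj i L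
        _ = _ := by
            simp [Matrix.updateCol_apply, Matrix.one_apply, Pi.single_apply, eq_comm]
    · rcases eq_or_ne j P with rfl | hjP
      · have h1 : ∀ k, C k P = adjugate A k P := fun k => by
          simp [hC, Matrix.updateCol_apply, hPL, Ne.symm hPL]
        calc (∑ k, A i k * C k P) = ∑ k, A i k * adjugate A k P :=
              Finset.sum_congr rfl fun k _ => by rw [h1]
          _ = A.det * (1 : Matrix (Fin (n+2)) (Fin (n+2)) R) i P := hadj i P
          _ = _ := by
              simp [Matrix.updateCol_apply, hPL, Ne.symm hPL, Matrix.one_apply,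
                Pi.single_apply, eq_comm]
      · have h1 : ∀ k, C k j = (1 : Matrix (Fin (n+2)) (Fin (n+2)) R) k j := fun k => by
          simp [hC, Matrix.updateCol_apply, hjL, hjP]
        calc (∑ k, A i k * C k j) = ∑ k, A i k * (1 : Matrix (Fin (n+2)) (Fin (n+2)) R) k j :=
              Finset.sum_congr rfl fun k _ => by rw [h1]
          _ = A i j := by simp [Matrix.one_apply, mul_ite, Finset.sum_ite_eq']
          _ = _ := by simp [Matrix.updateCol_apply, hjL, hjP]
  have hdetAC : (A * C).det = A.det * (A.det *
      (A.submatrix (fun i : Fin n => i.castSucc.castSucc) (fun i => i.castSucc.castSucc)).det) := by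
    rw [hAC]
    rw [Matrix.det_updateCol_smul]
    rw [updateColumn_comm _ hPL, Matrix.det_updateCol_smul, updateColumn_comm _ (Ne.symm hPL)]
    rw [det_updateColumn_single_last ((A.updateCol P (Pi.single P 1)))]
    have hsub : ((A.updateCol P (Pi.single P 1))).submatrix Fin.castSucc Fin.castSucc
        = (A.submatrix Fin.castSucc Fin.castSucc).updateCol (Fin.last n)
            (Pi.single (Fin.last n) 1) := by
      ext i j
      simp only [Matrix.submatrix_apply, Matrix.updateCol_apply, hP]
      by_cases hj : j = Fin.last n
      · simp [hj, Pi.single_apply, Fin.ext_iff]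
      · have hne : Fin.castSucc j ≠ P := fun hcast => hj (Fin.castSucc_injective _ hcast)
        simp [hj, hne]
    rw [hsub, det_updateColumn_single_last, Matrix.submatrix_submatrix]
    rw [show (Fin.castSucc ∘ Fin.castSucc : Fin n → Fin (n+2))
      = (fun i : Fin n => i.castSucc.castSucc) from rfl]
  have := Matrix.det_mul A C
  rw [hdetAC, hdetC] at this
  rw [← this]

end Jacobi
section DJ

open Matrix

/-- The Desnanot–Jacobi (Dodgson condensation) identity, corner version. -/
theorem desnanot_jacobi {R : Type*} [CommRing R] {n : ℕ}
    (A : Matrix (Fin (n+2)) (Fin (n+2)) R) :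
    (A.submatrix (Fin.last (n+1)).succAbove (Fin.last (n+1)).succAbove).det *
        (A.submatrix (Fin.castSucc (Fin.last n)).succAbove
          (Fin.castSucc (Fin.last n)).succAbove).det
      - (A.submatrix (Fin.castSucc (Fin.last n)).succAbove (Fin.last (n+1)).succAbove).det *
        (A.submatrix (Fin.last (n+1)).succAbove (Fin.castSucc (Fin.last n)).succAbove).det
    = A.det *
        (A.submatrix (fun i : Fin n => i.castSucc.castSucc) (fun i => i.castSucc.castSucc)).det := by
  classical
  set G : Matrix (Fin (n+2)) (Fin (n+2)) (MvPolynomial (Fin (n+2) × Fin (n+2)) ℤ) :=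
    Matrix.mvPolynomialX (Fin (n+2)) (Fin (n+2)) ℤ with hG
  have hGdet : G.det ≠ 0 := Matrix.det_mvPolynomialX_ne_zero (Fin (n+2)) ℤ
  have hcancel := mul_left_cancel₀ hGdet (key_identity G)
  set φ : MvPolynomial (Fin (n+2) × Fin (n+2)) ℤ →+* R :=
    MvPolynomial.eval₂Hom (Int.castRingHom R) (fun p => A p.1 p.2) with hφ
  have hGA : G.map φ = A := by
    ext i j
    simp [hG, hφ, Matrix.map_apply]
  have hminor : ∀ (k : ℕ) (f g : Fin k → Fin (n+2)),
      φ (G.submatrix f g).det = (A.submatrix f g).det := by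
    intro k f g
    rw [RingHom.map_det, RingHom.mapMatrix_apply]
    congr 1
    ext i j
    simp [hG, hφ, Matrix.map_apply]
  have h := congrArg φ hcancel
  have hdetA : φ G.det = A.det := by
    rw [RingHom.map_det, RingHom.mapMatrix_apply, hGA]
  rw [map_sub, _root_.map_mul, _root_.map_mul, _root_.map_mul, hdetA] at h
  rw [hminor, hminor, hminor, hminor, hminor] at h
  exact h

end DJ
section Hankel

open Matrix

noncomputable def Amat (w : ℝ → ℝ) (N : ℕ) (s : ℝ) : Matrix (Fin N) (Fin N) ℝ :=
  Matrix.of fun i j => mom w ((i : ℕ) + (j : ℕ)) s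

def sh (N : ℕ) (k : Fin N) : ℕ := if (k : ℕ) = N - 1 then N else (k : ℕ)

noncomputable def Bmat (w : ℝ → ℝ) (N : ℕ) (s : ℝ) : Matrix (Fin N) (Fin N) ℝ :=
  Matrix.of fun i j => mom w (sh N i + (j : ℕ)) s

noncomputable def Cmat (w : ℝ → ℝ) (N : ℕ) (s : ℝ) : Matrix (Fin N) (Fin N) ℝ :=
  Matrix.of fun i j => mom w (sh N i + sh N j) s

variable {w : ℝ → ℝ}

lemma step1 (hw : Continuous w) (n : ℕ) (s : ℝ) :
    HasDerivAt (fun u => (Amat w (n+1) u).det) ((Bmat w (n+1) s).det) s := by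
  have h := hasDerivAt_det (fun u => Amat w (n+1) u)
    (Matrix.of fun i j : Fin (n+1) => mom w ((i : ℕ) + (j : ℕ) + 1) s) s
    (fun i j => by simpa [Amat] using hasDerivAt_mom w hw ((i : ℕ) + (j : ℕ)) s)
  convert h using 1
  rw [Finset.sum_eq_single (Fin.last n)]
  · have hU : (Amat w (n+1) s).updateCol (Fin.last n)
        (fun i => Matrix.of (fun i j : Fin (n+1) => mom w ((i : ℕ) + (j : ℕ) + 1) s) i (Fin.last n))
        = (Bmat w (n+1) s)ᵀ := by
      ext i j
      simp only [Matrix.updateCol_apply, Matrix.transpose_apply, Bmat, Amat, Matrix.of_apply, sh]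
      by_cases hj : j = Fin.last n
      · rw [if_pos hj, if_pos (by simp [hj])]
        congr 1
        simp [hj]
        omega
      · rw [if_neg hj, if_neg (by simpa [Fin.ext_iff] using hj)]
        congr 1
        omega
    rw [hU, Matrix.det_transpose]
  · intro k _ hk
    have hklt : (k : ℕ) < n := by
      rcases lt_or_eq_of_le (Nat.lt_succ_iff.mp k.isLt) with h | h
      · exact h
      · exact absurd (Fin.ext h : k = Fin.last n) hk
    refine Matrix.det_zero_of_column_eq (show k ≠ ⟨(k:ℕ)+1, by omega⟩ by
      simp [Fin.ext_iff]) fun i => ?_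
    simp only [Matrix.updateCol_apply, if_pos rfl, Matrix.of_apply, Amat,
      if_neg (show (⟨(k:ℕ)+1, by omega⟩ : Fin (n+1)) ≠ k by simp [Fin.ext_iff])]
    rfl
  · intro h
    exact absurd (Finset.mem_univ _) h

lemma step2 (hw : Continuous w) (n : ℕ) (s : ℝ) :
    HasDerivAt (fun u => (Bmat w (n+1) u).det) ((Cmat w (n+1) s).det) s := by
  have h := hasDerivAt_det (fun u => Bmat w (n+1) u)
    (Matrix.of fun i j : Fin (n+1) => mom w (sh (n+1) i + (j : ℕ) + 1) s) s
    (fun i j => by simpa [Bmat] using hasDerivAt_mom w hw (sh (n+1) i + (j : ℕ)) s)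
  convert h using 1
  rw [Finset.sum_eq_single (Fin.last n)]
  · have hU : (Bmat w (n+1) s).updateCol (Fin.last n)
        (fun i => Matrix.of (fun i j : Fin (n+1) => mom w (sh (n+1) i + (j : ℕ) + 1) s) i
          (Fin.last n))
        = Cmat w (n+1) s := by
      ext i j
      simp only [Matrix.updateCol_apply, Cmat, Bmat, Matrix.of_apply]
      by_cases hj : j = Fin.last n
      · rw [if_pos hj]
        congr 1
        have : sh (n+1) j = n + 1 := by simp [sh, hj]
        rw [this]
        simp
        omega
      · rw [if_neg hj]
        congr 1
        have : sh (n+1) j = (j : ℕ) := by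
          simp only [sh, Nat.add_sub_cancel]
          exact if_neg (by simpa [Fin.ext_iff] using hj)
        omega
    rw [hU]
  · intro k _ hk
    have hklt : (k : ℕ) < n := by
      rcases lt_or_eq_of_le (Nat.lt_succ_iff.mp k.isLt) with h | h
      · exact h
      · exact absurd (Fin.ext h : k = Fin.last n) hk
    refine Matrix.det_zero_of_column_eq (show k ≠ ⟨(k:ℕ)+1, by omega⟩ by
      simp [Fin.ext_iff]) fun i => ?_
    simp only [Matrix.updateCol_apply, if_pos rfl, Matrix.of_apply, Bmat,
      if_neg (show (⟨(k:ℕ)+1, by omega⟩ : Fin (n+1)) ≠ k by simp [Fin.ext_iff])]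
    rfl
  · intro h
    exact absurd (Finset.mem_univ _) h

lemma succAbove_P_val (n : ℕ) (i : Fin (n+1)) :
    ((((Fin.last n).castSucc : Fin (n+2))).succAbove i : ℕ) = sh (n+1) i := by
  unfold Fin.succAbove sh
  by_cases h : (i : ℕ) < n
  · rw [if_pos (by simpa [Fin.lt_def] using h), if_neg (by omega)]
    rfl
  · have : (i : ℕ) = n := by omega
    rw [if_neg (by simpa [Fin.lt_def] using h), if_pos (by omega)]
    simp [Fin.val_succ, this]

lemma succAbove_L_val (n : ℕ) (i : Fin (n+1)) :
    (((Fin.last (n+1)).succAbove i : Fin (n+2)) : ℕ) = (i : ℕ) := by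
  rw [Fin.succAbove_last]
  rfl

/-- The Toda/Jacobi identity for the Hankel matrices. -/
lemma hankel_jacobi (n : ℕ) (s : ℝ) :
    (Cmat w (n+1) s).det * (Amat w (n+1) s).det - (Bmat w (n+1) s).det * (Bmat w (n+1) s).det
      = (Amat w (n+2) s).det * (Amat w n s).det := by
  have h := desnanot_jacobi (Amat w (n+2) s)
  have hLL : (Amat w (n+2) s).submatrix (Fin.last (n+1)).succAbove (Fin.last (n+1)).succAbove
      = Amat w (n+1) s := by
    ext i j
    simp only [Matrix.submatrix_apply, Amat, Matrix.of_apply]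
    rw [succAbove_L_val, succAbove_L_val]
  have hPP : (Amat w (n+2) s).submatrix (Fin.castSucc (Fin.last n)).succAbove
      (Fin.castSucc (Fin.last n)).succAbove = Cmat w (n+1) s := by
    ext i j
    simp only [Matrix.submatrix_apply, Amat, Cmat, Matrix.of_apply]
    rw [succAbove_P_val, succAbove_P_val]
  have hPL : (Amat w (n+2) s).submatrix (Fin.castSucc (Fin.last n)).succAbove
      (Fin.last (n+1)).succAbove = Bmat w (n+1) s := by
    ext i j
    simp only [Matrix.submatrix_apply, Amat, Bmat, Matrix.of_apply]
    rw [succAbove_P_val, succAbove_L_val]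
  have hLP : (Amat w (n+2) s).submatrix (Fin.last (n+1)).succAbove
      (Fin.castSucc (Fin.last n)).succAbove = (Bmat w (n+1) s)ᵀ := by
    ext i j
    simp only [Matrix.submatrix_apply, Amat, Bmat, Matrix.of_apply, Matrix.transpose_apply]
    rw [succAbove_P_val, succAbove_L_val, Nat.add_comm]
  have hinner : (Amat w (n+2) s).submatrix (fun i : Fin n => i.castSucc.castSucc)
      (fun i => i.castSucc.castSucc) = Amat w n s := by
    ext i j
    simp only [Matrix.submatrix_apply, Amat, Matrix.of_apply]
    rfl
  rw [hLL, hPP, hPL, hLP, hinner, Matrix.det_transpose] at h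
  linarith [h]

end Hankel



/-- Toda equation for Hankel determinants of exponentially
deformed moments: let `w : ℝ → ℝ` be continuous,
`m_j(s) = ∫_{−2}^{2} t^j e^{st} w(t) dt`, and
`D_N(s) = det(m_{i+j}(s))_{0≤i,j≤N−1}` (so `D₀ ≡ 1`).  Then each `D_N` is
twice differentiable and for `N ≥ 1`,
`D_N″·D_N − (D_N′)² = D_{N+1}·D_{N−1}`. -/
theorem moment_hankel_toda (w : ℝ → ℝ) (hw : Continuous w)
    (D : ℕ → ℝ → ℝ)
    (hD : ∀ (N : ℕ) (s : ℝ),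
      D N s = (Matrix.of fun i j : Fin N =>
        ∫ t in (-2 : ℝ)..2, t ^ ((i : ℕ) + (j : ℕ)) * Real.exp (s * t) * w t).det) :
    (∀ N : ℕ, Differentiable ℝ (D N) ∧ Differentiable ℝ (deriv (D N))) ∧
    ∀ N : ℕ, 1 ≤ N → ∀ s : ℝ,
      deriv (deriv (D N)) s * D N s - (deriv (D N) s) ^ 2 = D (N + 1) s * D (N - 1) s := by
  have hA : ∀ N s, D N s = (Amat w N s).det := fun N s => hD N s
  have hd1 : ∀ n (s : ℝ), HasDerivAt (D (n+1)) ((Bmat w (n+1) s).det) s := by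
    intro n s
    exact HasDerivAt.congr_of_eventuallyEq (step1 hw n s)
      (Filter.Eventually.of_forall fun u => hA (n+1) u)
  have hderiv1 : ∀ n, deriv (D (n+1)) = fun s => (Bmat w (n+1) s).det :=
    fun n => funext fun s => (hd1 n s).deriv
  have hd2 : ∀ n (s : ℝ), HasDerivAt (deriv (D (n+1))) ((Cmat w (n+1) s).det) s := by
    intro n s
    rw [hderiv1 n]
    exact step2 hw n s
  have hD0 : D 0 = fun _ => (1 : ℝ) := funext fun s => by
    rw [hD 0 s]
    exact Matrix.det_fin_zero
  constructor
  · intro N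
    cases N with
    | zero =>
        rw [hD0]
        refine ⟨differentiable_const _, ?_⟩
        rw [show deriv (fun _ : ℝ => (1 : ℝ)) = fun _ => 0 from
          funext fun s => deriv_const s 1]
        exact differentiable_const _
    | succ n =>
        exact ⟨fun s => (hd1 n s).differentiableAt, fun s => (hd2 n s).differentiableAt⟩
  · intro N hN s
    obtain ⟨n, rfl⟩ : ∃ n, N = n + 1 := ⟨N - 1, by omega⟩
    have e1 : deriv (deriv (D (n+1))) s = (Cmat w (n+1) s).det := (hd2 n s).deriv
    have e2 : deriv (D (n+1)) s = (Bmat w (n+1) s).det := (hd1 n s).deriv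
    rw [e1, e2, hA (n+1), hA (n+1+1), show (n+1-1) = n from rfl, hA n]
    have h := hankel_jacobi (w := w) n s
    rw [pow_two]
    linarith [h]
end

section
/- Let N ≥ 1 be an integer and let Q_N ∈ ℝ[X] denote the N-th derivative of the polynomial (X² − 4)^N. Then there exists a constant c > 0 such that for every x ∈ ℝ, (1/N!)·∫_{[−2,2]^N} ∏_{1≤i<j≤N}(t_i − t_j)² · ∏_{j=1}^{N}(x − t_j) dt₁⋯dt_N = c · Q_N(x). (The expected characteristic polynomial of the Legendre ensemble is, up to a positive constant, the rescaled Legendre polynomial P_N(x/2) given by Rodrigues' formula.) -/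
open MeasureTheory Polynomial Finset

noncomputable section AuxLegendre

noncomputable section AuxLegendre

/-- the cube `[-2,2]^M` -/
def lcube (M : ℕ) : Set (Fin M → ℝ) := Set.univ.pi (fun _ => Set.Icc (-2 : ℝ) 2)

lemma lcube_compact (M : ℕ) : IsCompact (lcube M) :=
  isCompact_univ_pi fun _ => isCompact_Icc

lemma integrableOn_lcube {M : ℕ} {f : (Fin M → ℝ) → ℝ} (hf : Continuous f) :
    IntegrableOn f (lcube M) :=
  hf.continuousOn.integrableOn_compact (lcube_compact M)

/-- Vandermonde product -/
def Vd {M : ℕ} (s : Fin M → ℝ) : ℝ := ∏ i : Fin M, ∏ j ∈ Finset.Ioi i, (s j - s i)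

lemma Vd_eq_det {M : ℕ} (s : Fin M → ℝ) : Vd s = (Matrix.vandermonde s).det :=
  (Matrix.det_vandermonde s).symm

lemma continuous_Vd {M : ℕ} : Continuous (Vd (M := M)) := by
  unfold Vd
  exact continuous_finset_prod _ fun i _ =>
    continuous_finset_prod _ fun j _ => (continuous_apply j).sub (continuous_apply i)

lemma Vd_swap {M : ℕ} (p q : Fin M) (hpq : p ≠ q) (s : Fin M → ℝ) :
    Vd (s ∘ Equiv.swap p q) = - Vd s := by
  rw [Vd_eq_det, Vd_eq_det]
  have h : Matrix.vandermonde (s ∘ Equiv.swap p q)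
      = (Matrix.vandermonde s).submatrix (Equiv.swap p q) id := rfl
  rw [h, Matrix.det_permute, Equiv.Perm.sign_swap hpq]
  push_cast
  ring

lemma lcube_comp_perm {M : ℕ} (σ : Equiv.Perm (Fin M)) (s : Fin M → ℝ) :
    s ∘ σ ∈ lcube M ↔ s ∈ lcube M := by
  simp only [lcube, Set.mem_pi, Set.mem_univ, forall_true_left, Function.comp]
  exact ⟨fun h i => by simpa using h (σ.symm i), fun h i => h _⟩

lemma integral_lcube_comp_perm {M : ℕ} (σ : Equiv.Perm (Fin M)) (f : (Fin M → ℝ) → ℝ) :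
    ∫ s in lcube M, f (s ∘ σ) = ∫ s in lcube M, f s := by
  have hmp := MeasureTheory.volume_measurePreserving_piCongrLeft (fun _ : Fin M => ℝ) σ.symm
  have hT : ∀ g : Fin M → ℝ, (MeasurableEquiv.piCongrLeft (fun _ : Fin M => ℝ) σ.symm) g = g ∘ σ := by
    intro g; funext i
    simp [MeasurableEquiv.piCongrLeft, Equiv.piCongrLeft_apply]
  have hpre : (MeasurableEquiv.piCongrLeft (fun _ : Fin M => ℝ) σ.symm) ⁻¹' (lcube M) = lcube M := by
    ext g
    simp only [Set.mem_preimage, hT]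
    exact lcube_comp_perm σ g
  have := hmp.setIntegral_preimage_emb
    (MeasurableEquiv.measurableEmbedding _) f (lcube M)
  rw [hpre] at this
  rw [← this]
  congr 1
  funext s
  rw [hT]

lemma Ioi_castSucc_eq (N : ℕ) (i : Fin N) :
    Finset.Ioi (i.castSucc) = insert (Fin.last N) ((Finset.Ioi i).map Fin.castSuccEmb) := by
  ext j
  simp only [Finset.mem_Ioi, Finset.mem_insert, Finset.mem_map, Fin.castSuccEmb]
  constructor
  · intro hj
    rcases Fin.eq_castSucc_or_eq_last j with ⟨j', rfl⟩ | rfl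
    · exact Or.inr ⟨j', by simpa [Fin.castSucc_lt_castSucc_iff] using hj, rfl⟩
    · exact Or.inl rfl
  · rintro (rfl | ⟨j', hj', rfl⟩)
    · exact Fin.castSucc_lt_last i
    · exact Fin.castSucc_lt_castSucc_iff.mpr hj'

lemma Vd_succ (N : ℕ) (s : Fin (N+1) → ℝ) :
    Vd s = Vd (fun i : Fin N => s i.castSucc) * ∏ j : Fin N, (s (Fin.last N) - s j.castSucc) := by
  unfold Vd
  rw [Fin.prod_univ_castSucc]
  have hlast : ∏ j ∈ Finset.Ioi (Fin.last N), (s j - s (Fin.last N)) = 1 :=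
    Finset.prod_eq_one fun j hj => absurd (Finset.mem_Ioi.1 hj) (not_lt.2 (Fin.le_last j))
  rw [hlast, mul_one]
  have h1 : ∀ i : Fin N, ∏ j ∈ Finset.Ioi i.castSucc, (s j - s i.castSucc)
      = (∏ j ∈ Finset.Ioi i, (s j.castSucc - s i.castSucc)) * (s (Fin.last N) - s i.castSucc) := by
    intro i
    rw [Ioi_castSucc_eq, Finset.prod_insert, Finset.prod_map]
    · have : ∀ j' : Fin N, s (Fin.castSuccEmb j') = s j'.castSucc := fun _ => rfl
      simp only [this]
      ring
    · intro hmem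
      rw [Finset.mem_map] at hmem
      obtain ⟨j', _, hj'⟩ := hmem
      exact Fin.ne_of_lt (Fin.castSucc_lt_last j') (by simpa using hj')
  simp_rw [h1]
  rw [Finset.prod_mul_distrib]

lemma fubini_lcube (N : ℕ) (f : (Fin (N+1) → ℝ) → ℝ) (hf : Continuous f) :
    ∫ s in lcube (N+1), f s
      = ∫ x in Set.Icc (-2:ℝ) 2, ∫ t in lcube N, f (Fin.snoc t x) := by
  set e := MeasurableEquiv.piFinSuccAbove (fun _ : Fin (N+1) => ℝ) (Fin.last N) with he
  have hmp : MeasurePreserving e := volume_preserving_piFinSuccAbove _ _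
  have hesymm : ∀ p : ℝ × (Fin N → ℝ), e.symm p = Fin.snoc p.2 p.1 := by
    intro p
    simp [he, MeasurableEquiv.piFinSuccAbove, Fin.insertNthEquiv, Fin.insertNth_last']
  have hpre : e ⁻¹' (Set.Icc (-2:ℝ) 2 ×ˢ lcube N) = lcube (N+1) := by
    ext s
    simp only [Set.mem_preimage, Set.mem_prod, lcube, Set.mem_pi, Set.mem_univ, forall_true_left,
      he, MeasurableEquiv.piFinSuccAbove, MeasurableEquiv.coe_mk, Fin.insertNthEquiv,
      Equiv.coe_fn_symm_mk]
    constructor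
    · rintro ⟨h1, h2⟩ i
      rcases Fin.eq_castSucc_or_eq_last i with ⟨j, rfl⟩ | rfl
      · simpa [Fin.succAbove_last, Fin.init] using h2 j
      · exact h1
    · intro h
      refine ⟨h _, fun j => ?_⟩
      simpa [Fin.succAbove_last, Fin.init] using h (j.castSucc)
  have hint : IntegrableOn (fun p : ℝ × (Fin N → ℝ) => f (Fin.snoc p.2 p.1))
      (Set.Icc (-2:ℝ) 2 ×ˢ lcube N) (volume.prod volume) := by
    have hcont : Continuous (fun p : ℝ × (Fin N → ℝ) => f (Fin.snoc p.2 p.1)) := by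
      refine hf.comp (continuous_pi fun i => ?_)
      rcases Fin.eq_castSucc_or_eq_last i with ⟨j, rfl⟩ | rfl
      · simp only [Fin.snoc_castSucc]
        exact (continuous_apply j).comp continuous_snd
      · simpa using continuous_fst
    have hcomp : IsCompact (Set.Icc (-2:ℝ) 2 ×ˢ lcube N) :=
      isCompact_Icc.prod (lcube_compact N)
    have := hcont.continuousOn.integrableOn_compact (μ := volume) hcomp
    rwa [Measure.volume_eq_prod] at this
  calc ∫ s in lcube (N+1), f s
      = ∫ p in Set.Icc (-2:ℝ) 2 ×ˢ lcube N, f (e.symm p) := by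
        rw [← hpre]
        have h2 := hmp.setIntegral_preimage_emb (MeasurableEquiv.measurableEmbedding _)
          (fun p => f (e.symm p)) (Set.Icc (-2:ℝ) 2 ×ˢ lcube N)
        simp only [e.symm_apply_apply] at h2
        exact h2
    _ = ∫ p in Set.Icc (-2:ℝ) 2 ×ˢ lcube N, f (Fin.snoc p.2 p.1) := by
        congr 1; funext p; rw [hesymm]
    _ = ∫ x in Set.Icc (-2:ℝ) 2, ∫ t in lcube N, f (Fin.snoc t x) := by
        rw [Measure.volume_eq_prod, ← Measure.prod_restrict]
        exact MeasureTheory.integral_prod _ (by rwa [Measure.prod_restrict])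

lemma integral_vd_monomial_repeat {M : ℕ} (a : Fin M → ℕ) (p q : Fin M) (hpq : p ≠ q)
    (ha : a p = a q) :
    ∫ s in lcube M, Vd s * ∏ i, s i ^ a i = 0 := by
  set f : (Fin M → ℝ) → ℝ := fun s => Vd s * ∏ i, s i ^ a i with hf
  have haσ : ∀ i, a (Equiv.swap p q i) = a i := by
    intro i
    rcases eq_or_ne i p with rfl | hip
    · rw [Equiv.swap_apply_left]; exact ha.symm
    rcases eq_or_ne i q with rfl | hiq
    · rw [Equiv.swap_apply_right]; exact ha
    · rw [Equiv.swap_apply_of_ne_of_ne hip hiq]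
  have key : ∀ s, f (s ∘ Equiv.swap p q) = - f s := by
    intro s
    have h2 : (∏ i, ((s ∘ Equiv.swap p q) i) ^ a i) = ∏ i, s i ^ a i := by
      calc ∏ i, ((s ∘ Equiv.swap p q) i) ^ a i
          = ∏ i, (s (Equiv.swap p q i)) ^ a (Equiv.swap p q i) :=
            Finset.prod_congr rfl fun i _ => by rw [haσ]; rfl
        _ = ∏ i, s i ^ a i := Equiv.prod_comp (Equiv.swap p q) (fun j => s j ^ a j)
    simp only [hf]
    rw [Vd_swap p q hpq s, h2]
    ring
  have h := integral_lcube_comp_perm (Equiv.swap p q) f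
  simp_rw [key] at h
  rw [integral_neg] at h
  linarith

lemma integral_core (N : ℕ) (k : ℕ) (hk : k < N) :
    ∫ s in lcube (N+1),
      Vd s * Vd (fun i : Fin N => s i.castSucc) * (s (Fin.last N)) ^ k = 0 := by
  have hexp : ∀ s : Fin (N+1) → ℝ,
      Vd s * Vd (fun i : Fin N => s i.castSucc) * (s (Fin.last N)) ^ k
      = ∑ σ : Equiv.Perm (Fin N), (Equiv.Perm.sign σ : ℝ) *
          (Vd s * ∏ j : Fin (N+1), s j ^
            (Fin.lastCases k (fun i : Fin N => ((σ.symm i : Fin N) : ℕ)) j)) := by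
    intro s
    have hdet : Vd (fun i : Fin N => s i.castSucc)
        = ∑ σ : Equiv.Perm (Fin N), (Equiv.Perm.sign σ : ℝ) *
            ∏ i : Fin N, s ((σ i).castSucc) ^ (i : ℕ) := by
      rw [show Vd (fun i : Fin N => s i.castSucc)
        = (Matrix.vandermonde (fun i : Fin N => s i.castSucc)).det from
          (Matrix.det_vandermonde _).symm, Matrix.det_apply']
      rfl
    rw [hdet, Finset.mul_sum, Finset.sum_mul]
    refine Finset.sum_congr rfl fun σ _ => ?_
    have hmono : ∏ j : Fin (N+1), s j ^
          (Fin.lastCases k (fun i : Fin N => ((σ.symm i : Fin N) : ℕ)) j)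
        = (∏ i : Fin N, s ((σ i).castSucc) ^ (i : ℕ)) * s (Fin.last N) ^ k := by
      rw [Fin.prod_univ_castSucc]
      simp only [Fin.lastCases_castSucc, Fin.lastCases_last]
      congr 1
      calc ∏ i : Fin N, s i.castSucc ^ ((σ.symm i : Fin N) : ℕ)
          = ∏ i : Fin N, s ((σ i).castSucc) ^ ((σ.symm (σ i) : Fin N) : ℕ) :=
            (Equiv.prod_comp σ (fun j => s j.castSucc ^ ((σ.symm j : Fin N) : ℕ))).symm
        _ = ∏ i : Fin N, s ((σ i).castSucc) ^ (i : ℕ) := by simp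
    rw [hmono]
    ring
  simp_rw [hexp]
  rw [MeasureTheory.integral_finset_sum]
  · refine Finset.sum_eq_zero fun σ _ => ?_
    rw [MeasureTheory.integral_const_mul]
    have := integral_vd_monomial_repeat
      (fun j => Fin.lastCases k (fun i : Fin N => ((σ.symm i : Fin N) : ℕ)) j)
      ((σ ⟨k, hk⟩).castSucc) (Fin.last N)
      (Fin.ne_of_lt (Fin.castSucc_lt_last _))
      (by simp)
    rw [this, mul_zero]
  · intro σ _
    apply integrableOn_lcube
    refine Continuous.mul continuous_const (Continuous.mul continuous_Vd ?_)
    exact continuous_finset_prod _ fun j _ => (continuous_apply j).pow _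

lemma W_eq_Vd_sq {M : ℕ} (t : Fin M → ℝ) :
    (∏ i : Fin M, ∏ j ∈ Finset.Ioi i, (t i - t j) ^ 2) = Vd t ^ 2 := by
  unfold Vd
  rw [← Finset.prod_pow]
  refine Finset.prod_congr rfl fun i _ => ?_
  rw [← Finset.prod_pow]
  exact Finset.prod_congr rfl fun j _ => by ring

lemma ortho_P (N k : ℕ) (hk : k < N) :
    ∫ x in Set.Icc (-2:ℝ) 2, x ^ k *
      ∫ t in lcube N,
        (∏ i : Fin N, ∏ j ∈ Finset.Ioi i, (t i - t j) ^ 2) * ∏ j : Fin N, (x - t j)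
      = 0 := by
  set g : (Fin (N+1) → ℝ) → ℝ :=
    fun s => Vd s * Vd (fun i : Fin N => s i.castSucc) * (s (Fin.last N)) ^ k with hg
  have hgc : Continuous g := by
    refine Continuous.mul (Continuous.mul continuous_Vd ?_) ((continuous_apply _).pow k)
    exact continuous_Vd.comp (continuous_pi fun i => continuous_apply _)
  have hpoint : ∀ (x : ℝ) (t : Fin N → ℝ),
      x ^ k * ((∏ i : Fin N, ∏ j ∈ Finset.Ioi i, (t i - t j) ^ 2) * ∏ j : Fin N, (x - t j))
      = g (Fin.snoc t x) := by
    intro x t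
    have h1 : Vd (Fin.snoc t x : Fin (N+1) → ℝ)
        = Vd t * ∏ j : Fin N, (x - t j) := by
      rw [Vd_succ]
      simp [Fin.snoc_castSucc, Fin.snoc_last]
    simp only [hg, h1, Fin.snoc_castSucc, Fin.snoc_last, W_eq_Vd_sq]
    ring
  have swap1 : (fun x : ℝ => x ^ k *
      ∫ t in lcube N,
        (∏ i : Fin N, ∏ j ∈ Finset.Ioi i, (t i - t j) ^ 2) * ∏ j : Fin N, (x - t j))
      = fun x : ℝ => ∫ t in lcube N, g (Fin.snoc t x) := by
    funext x
    rw [← MeasureTheory.integral_const_mul]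
    exact MeasureTheory.integral_congr_ae (Filter.Eventually.of_forall fun t => hpoint x t)
  rw [swap1, ← fubini_lcube N g hgc]
  exact integral_core N k hk

lemma coeff_X_sub_C_mul (c : ℝ) (p : ℝ[X]) (k : ℕ) :
    ((X - C c) * p).coeff k = (if k = 0 then 0 else p.coeff (k-1)) - c * p.coeff k := by
  rw [sub_mul, Polynomial.coeff_sub, Polynomial.coeff_C_mul]
  congr 1
  cases k with
  | zero => simp [Polynomial.mul_coeff_zero]
  | succ n => simp [Polynomial.coeff_X_mul]

lemma cont_coeff_prod {M : ℕ} (s : Finset (Fin M)) :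
    ∀ k : ℕ, Continuous fun t : Fin M → ℝ => ((∏ j ∈ s, (X - C (t j))).coeff k) := by
  induction s using Finset.cons_induction with
  | empty => intro k; simp only [Finset.prod_empty]; exact continuous_const
  | cons a s ha ih =>
    intro k
    have hfun : (fun t : Fin M → ℝ => ((∏ j ∈ Finset.cons a s ha, (X - C (t j))).coeff k))
        = fun t => (if k = 0 then 0 else (∏ j ∈ s, (X - C (t j))).coeff (k-1))
            - t a * (∏ j ∈ s, (X - C (t j))).coeff k := by
      funext t
      rw [Finset.prod_cons, coeff_X_sub_C_mul]
    rw [hfun]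
    refine Continuous.sub ?_ ((continuous_apply a).mul (ih k))
    split_ifs
    · exact continuous_const
    · exact ih (k-1)

lemma prodXsubC_monic {N : ℕ} (t : Fin N → ℝ) :
    (∏ j : Fin N, (X - C (t j))).Monic :=
  monic_prod_of_monic _ _ fun j _ => monic_X_sub_C (t j)

lemma prodXsubC_natDegree {N : ℕ} (t : Fin N → ℝ) :
    (∏ j : Fin N, (X - C (t j))).natDegree = N := by
  rw [Polynomial.natDegree_prod _ _ fun j _ => X_sub_C_ne_zero (t j)]
  simp [Polynomial.natDegree_X_sub_C]

lemma prodXsubC_coeff_self {N : ℕ} (t : Fin N → ℝ) :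
    (∏ j : Fin N, (X - C (t j))).coeff N = 1 := by
  have := (prodXsubC_monic t).coeff_natDegree
  rwa [prodXsubC_natDegree t] at this

section Pstuff
variable (N : ℕ)

noncomputable def Wf : (Fin N → ℝ) → ℝ :=
  fun t => ∏ i : Fin N, ∏ j ∈ Finset.Ioi i, (t i - t j) ^ 2

lemma continuous_Wf : Continuous (Wf N) := by
  have : Wf N = fun t => Vd t ^ 2 := funext fun t => W_eq_Vd_sq t
  rw [this]
  exact continuous_Vd.pow 2

noncomputable def Pco : ℕ → ℝ :=
  fun k => ∫ t in lcube N, Wf N t * (∏ j : Fin N, (X - C (t j))).coeff k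

noncomputable def Ppoly : ℝ[X] := ∑ k ∈ Finset.range (N+1), C (Pco N k) * X ^ k

lemma Ppoly_natDegree_le : (Ppoly N).natDegree ≤ N := by
  refine Polynomial.natDegree_sum_le_of_forall_le _ _ fun k hk => ?_
  refine (Polynomial.natDegree_mul_le).trans ?_
  simp only [Polynomial.natDegree_C, Polynomial.natDegree_X_pow, zero_add]
  exact Nat.lt_succ_iff.mp (Finset.mem_range.mp hk)

lemma Ppoly_coeff_N : (Ppoly N).coeff N = ∫ t in lcube N, Wf N t := by
  have h1 : (Ppoly N).coeff N = Pco N N := by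
    unfold Ppoly
    rw [Polynomial.finset_sum_coeff]
    simp only [Polynomial.coeff_C_mul, Polynomial.coeff_X_pow]
    rw [Finset.sum_eq_single N]
    · simp
    · intro k _ hkN
      simp [Ne.symm hkN]
    · intro h
      exact absurd (Finset.self_mem_range_succ N) h
  rw [h1]
  unfold Pco
  congr 1
  funext t
  rw [prodXsubC_coeff_self, mul_one]

lemma Ppoly_eval (x : ℝ) :
    (Ppoly N).eval x = ∫ t in lcube N, Wf N t * ∏ j : Fin N, (x - t j) := by
  have h1 : (Ppoly N).eval x = ∑ k ∈ Finset.range (N+1), Pco N k * x ^ k := by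
    unfold Ppoly
    rw [Polynomial.eval_finset_sum]
    simp
  have h2 : ∀ k, Pco N k * x ^ k
      = ∫ t in lcube N, Wf N t * (∏ j : Fin N, (X - C (t j))).coeff k * x ^ k := by
    intro k
    unfold Pco
    rw [← MeasureTheory.integral_mul_const]
  rw [h1]
  simp_rw [h2]
  rw [← MeasureTheory.integral_finset_sum]
  · congr 1
    funext t
    have h3 : ∑ k ∈ Finset.range (N+1), Wf N t * (∏ j : Fin N, (X - C (t j))).coeff k * x ^ k
        = Wf N t * ∑ k ∈ Finset.range (N+1), (∏ j : Fin N, (X - C (t j))).coeff k * x ^ k := by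
      rw [Finset.mul_sum]
      exact Finset.sum_congr rfl fun k _ => by ring
    rw [h3, ← Polynomial.eval_eq_sum_range' (lt_of_le_of_lt (le_of_eq (prodXsubC_natDegree t)) (Nat.lt_succ_self N))]
    congr 1
    rw [Polynomial.eval_prod]
    exact Finset.prod_congr rfl fun j _ => by simp
  · intro k _
    apply integrableOn_lcube
    exact ((continuous_Wf N).mul (cont_coeff_prod Finset.univ k)).mul continuous_const

lemma Ppoly_coeff_N_pos (hN : 1 ≤ N) : 0 < (Ppoly N).coeff N := by
  rw [Ppoly_coeff_N]
  have hW : ∀ t, 0 ≤ Wf N t := fun t => by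
    rw [show Wf N t = Vd t ^ 2 from W_eq_Vd_sq t]; positivity
  rw [MeasureTheory.setIntegral_pos_iff_support_of_nonneg_ae
    (Filter.Eventually.of_forall hW) (integrableOn_lcube (continuous_Wf N))]
  set t0 : Fin N → ℝ := fun i => (i : ℝ) / N with ht0
  have hNpos : (0:ℝ) < N := by exact_mod_cast hN
  have ht0mem : ∀ i : Fin N, t0 i ∈ Set.Ioo (-2:ℝ) 2 := by
    intro i
    have h0 : (0:ℝ) ≤ t0 i := by positivity
    have h1 : t0 i < 1 := by
      rw [ht0, div_lt_one hNpos]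
      exact_mod_cast i.isLt
    exact ⟨by linarith, by linarith⟩
  have hVd0 : Vd t0 ≠ 0 := by
    unfold Vd
    rw [Finset.prod_ne_zero_iff]
    intro i _
    rw [Finset.prod_ne_zero_iff]
    intro j hj
    have hij : i < j := Finset.mem_Ioi.mp hj
    have hlt : t0 i < t0 j := by
      rw [ht0, div_lt_div_iff_of_pos_right hNpos]
      exact_mod_cast (Fin.lt_iff_val_lt_val.mp hij)
    exact sub_ne_zero.mpr (ne_of_gt hlt)
  have hU1 : IsOpen {t : Fin N → ℝ | Vd t ≠ 0} :=
    isOpen_compl_singleton.preimage continuous_Vd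
  have hUopen : IsOpen ({t : Fin N → ℝ | Vd t ≠ 0} ∩
      Set.univ.pi (fun _ => Set.Ioo (-2:ℝ) 2)) :=
    hU1.inter (isOpen_set_pi Set.finite_univ fun i _ => isOpen_Ioo)
  have hUne : t0 ∈ {t : Fin N → ℝ | Vd t ≠ 0} ∩
      Set.univ.pi (fun _ => Set.Ioo (-2:ℝ) 2) :=
    ⟨hVd0, fun i _ => ht0mem i⟩
  have hsub : {t : Fin N → ℝ | Vd t ≠ 0} ∩ Set.univ.pi (fun _ => Set.Ioo (-2:ℝ) 2)
      ⊆ Function.support (Wf N) ∩ lcube N := by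
    rintro t ⟨h1, h2⟩
    refine ⟨?_, fun i _ => Set.Ioo_subset_Icc_self (h2 i trivial)⟩
    rw [Function.mem_support, show Wf N t = Vd t ^ 2 from W_eq_Vd_sq t]
    exact pow_ne_zero 2 h1
  exact lt_of_lt_of_le (hUopen.measure_pos volume ⟨t0, hUne⟩) (measure_mono hsub)

end Pstuff

noncomputable def f0 (N : ℕ) : ℝ[X] := ((X : ℝ[X]) ^ 2 - 4) ^ N

lemma base_monic : ((X : ℝ[X]) ^ 2 - 4).Monic := by
  have h4 : (4 : ℝ[X]) = C (4 : ℝ) := (map_ofNat C 4).symm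
  rw [h4]
  exact monic_X_pow_sub_C (4 : ℝ) two_ne_zero

lemma f0_monic (N : ℕ) : (f0 N).Monic := base_monic.pow N

lemma f0_ne_zero (N : ℕ) : f0 N ≠ 0 := (f0_monic N).ne_zero

lemma f0_natDegree (N : ℕ) : (f0 N).natDegree = 2 * N := by
  unfold f0
  rw [Polynomial.natDegree_pow]
  have h4 : (4 : ℝ[X]) = C (4 : ℝ) := (map_ofNat C 4).symm
  rw [h4, Polynomial.natDegree_X_pow_sub_C]
  ring

lemma Qcoeff (N : ℕ) :
    (derivative^[N] (f0 N)).coeff N = ((2 * N).descFactorial N : ℝ) := by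
  rw [Polynomial.coeff_iterate_derivative]
  have h2 : (f0 N).coeff (N + N) = 1 := by
    have := (f0_monic N).coeff_natDegree
    rw [f0_natDegree] at this
    rw [show N + N = 2 * N by ring, this]
  rw [h2, show N + N = 2 * N by ring]
  simp

lemma Qcoeff_pos (N : ℕ) : 0 < (derivative^[N] (f0 N)).coeff N := by
  rw [Qcoeff]
  have : (2 * N).descFactorial N ≠ 0 := by
    rw [Ne, Nat.descFactorial_eq_zero_iff_lt]
    omega
  have := Nat.pos_of_ne_zero this
  exact_mod_cast this

lemma QnatDegree_le (N : ℕ) : (derivative^[N] (f0 N)).natDegree ≤ N := by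
  refine (Polynomial.natDegree_iterate_derivative _ _).trans ?_
  rw [f0_natDegree]
  omega

lemma f0_factor2 (N : ℕ) : ((X : ℝ[X]) - C 2) ^ N ∣ f0 N := by
  unfold f0
  have h : ((X : ℝ[X]) ^ 2 - 4) = (X - C 2) * (X + C 2) := by
    have h4 : (4 : ℝ[X]) = C (4 : ℝ) := (map_ofNat C 4).symm
    rw [h4, show C (4:ℝ) = C 2 * C 2 by rw [← C_mul]; norm_num]
    ring
  rw [h, mul_pow]
  exact dvd_mul_right _ _

lemma f0_factor2' (N : ℕ) : ((X : ℝ[X]) - C (-2)) ^ N ∣ f0 N := by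
  unfold f0
  have h : ((X : ℝ[X]) ^ 2 - 4) = (X - C (-2)) * (X - C 2) := by
    have h4 : (4 : ℝ[X]) = C (4 : ℝ) := (map_ofNat C 4).symm
    rw [h4, show C (4:ℝ) = C 2 * C 2 by rw [← C_mul]; norm_num, map_neg]
    ring
  rw [h, mul_pow]
  exact dvd_mul_right _ _

lemma f0_boundary (N m : ℕ) (hm : m < N) :
    (derivative^[m] (f0 N)).eval 2 = 0 ∧ (derivative^[m] (f0 N)).eval (-2) = 0 := by
  constructor
  · exact isRoot_iterate_derivative_of_lt_rootMultiplicity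
      (lt_of_lt_of_le hm ((Polynomial.le_rootMultiplicity_iff (f0_ne_zero N)).mpr (f0_factor2 N)))
  · exact isRoot_iterate_derivative_of_lt_rootMultiplicity
      (lt_of_lt_of_le hm ((Polynomial.le_rootMultiplicity_iff (f0_ne_zero N)).mpr (f0_factor2' N)))

lemma poly_ftc (r : ℝ[X]) (a b : ℝ) :
    ∫ x in a..b, (derivative r).eval x = r.eval b - r.eval a := by
  refine intervalIntegral.integral_eq_sub_of_hasDerivAt (fun x _ => r.hasDerivAt x) ?_
  exact (Polynomial.continuous _).intervalIntegrable _ _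

lemma Q_ortho_aux (N : ℕ) :
    ∀ j, j ≤ N → ∀ q : ℝ[X], q.natDegree < j →
      ∫ x in (-2:ℝ)..2, q.eval x * (derivative^[j] (f0 N)).eval x = 0 := by
  intro j
  induction j with
  | zero => intro _ q hq; omega
  | succ j ih =>
    intro hjN q hq
    set F := derivative^[j] (f0 N) with hF
    have hiter : derivative^[j+1] (f0 N) = derivative F := Function.iterate_succ_apply' _ _ _
    have hpoint : ∀ x : ℝ, q.eval x * (derivative F).eval x
        = (derivative (q * F)).eval x - (derivative q).eval x * F.eval x := by
      intro x
      rw [Polynomial.derivative_mul]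
      simp only [Polynomial.eval_add, Polynomial.eval_mul]
      ring
    rw [hiter]
    simp_rw [hpoint]
    rw [intervalIntegral.integral_sub (f := fun x => (derivative (q * F)).eval x)
      (g := fun x => (derivative q).eval x * F.eval x)
      ((Polynomial.continuous _).intervalIntegrable _ _)
      (((Polynomial.continuous (derivative q)).mul (Polynomial.continuous F)).intervalIntegrable _ _)]
    rw [poly_ftc]
    have hb := f0_boundary N j (by omega)
    rw [Polynomial.eval_mul, Polynomial.eval_mul, hb.1, hb.2, mul_zero, mul_zero, sub_zero,
      zero_sub, neg_eq_zero]
    by_cases hq0 : q.natDegree = 0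
    · obtain ⟨c, rfl⟩ := Polynomial.natDegree_eq_zero.mp hq0
      simp
    · have hlt : (derivative q).natDegree < j := by
        have := Polynomial.natDegree_derivative_lt hq0
        omega
      exact ih (by omega) (derivative q) hlt

lemma Q_ortho (N k : ℕ) (hk : k < N) :
    ∫ x in Set.Icc (-2:ℝ) 2, x ^ k * (derivative^[N] (f0 N)).eval x = 0 := by
  have h := Q_ortho_aux N N le_rfl ((X : ℝ[X]) ^ k)
    (by rw [Polynomial.natDegree_X_pow]; exact hk)
  simp only [Polynomial.eval_pow, Polynomial.eval_X] at h
  rw [MeasureTheory.integral_Icc_eq_integral_Ioc,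
    ← intervalIntegral.integral_of_le (by norm_num : (-2:ℝ) ≤ 2)]
  exact h

lemma integrableOn_Icc_poly (g : ℝ → ℝ) (hg : Continuous g) :
    IntegrableOn g (Set.Icc (-2:ℝ) 2) :=
  hg.continuousOn.integrableOn_compact isCompact_Icc

/-- for `N ≥ 1` and `Q_N = (d/dX)^N (X² − 4)^N ∈ ℝ[X]`
(Rodrigues' formula, so `Q_N` is proportional to the Legendre polynomial
`P_N(x/2)`), there exists `c > 0` such that for all `x ∈ ℝ`,
`(1/N!)·∫_{[−2,2]^N} ∏_{i<j}(t_i − t_j)² · ∏_j (x − t_j) dt = c·Q_N(x)`. -/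
theorem legendre_ensemble_char_poly (N : ℕ) (hN : 1 ≤ N) :
    ∃ c : ℝ, 0 < c ∧ ∀ x : ℝ,
      (1 / (N.factorial : ℝ)) *
        ∫ t in (Set.univ.pi (fun _ => Set.Icc (-2 : ℝ) 2) : Set (Fin N → ℝ)),
          (∏ i : Fin N, ∏ j ∈ Finset.Ioi i, (t i - t j) ^ 2) * ∏ j : Fin N, (x - t j)
      = c * (derivative^[N] ((X ^ 2 - 4 : ℝ[X]) ^ N)).eval x := by
  set Q : ℝ[X] := derivative^[N] (f0 N) with hQ
  set Z : ℝ := (Ppoly N).coeff N with hZ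
  set D : ℝ := Q.coeff N with hD
  have hZpos : 0 < Z := Ppoly_coeff_N_pos N hN
  have hDpos : 0 < D := Qcoeff_pos N
  set c0 : ℝ := Z / D with hc0
  set R : ℝ[X] := Ppoly N - C c0 * Q with hR
  -- orthogonality of Ppoly
  have orthoP : ∀ k, k < N → ∫ x in Set.Icc (-2:ℝ) 2, x ^ k * (Ppoly N).eval x = 0 := by
    intro k hk
    have h := ortho_P N k hk
    simp_rw [Ppoly_eval]
    convert h using 2
    rfl
  have orthoR : ∀ k, k < N → ∫ x in Set.Icc (-2:ℝ) 2, x ^ k * R.eval x = 0 := by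
    intro k hk
    have hsplit : ∀ x : ℝ, x ^ k * R.eval x
        = x ^ k * (Ppoly N).eval x - c0 * (x ^ k * Q.eval x) := by
      intro x
      simp only [hR, Polynomial.eval_sub, Polynomial.eval_mul, Polynomial.eval_C]
      ring
    simp_rw [hsplit]
    rw [MeasureTheory.integral_sub, MeasureTheory.integral_const_mul, orthoP k hk,
      Q_ortho N k hk, mul_zero, sub_zero]
    · exact integrableOn_Icc_poly _ ((continuous_pow k).mul (Polynomial.continuous _))
    · exact (integrableOn_Icc_poly _ ((continuous_pow k).mul (Polynomial.continuous _))).const_mul c0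
  -- R = 0
  have hRcoeff : R.coeff N = 0 := by
    simp only [hR, Polynomial.coeff_sub, Polynomial.coeff_C_mul]
    rw [← hZ, ← hD, hc0]
    field_simp
    ring
  have hRzero : R = 0 := by
    by_contra hRne
    have hRdeg : R.natDegree < N := by
      have hle : R.natDegree ≤ N := by
        exact (Polynomial.natDegree_sub_le _ _).trans (max_le (Ppoly_natDegree_le N)
          ((Polynomial.natDegree_C_mul_le _ _).trans (QnatDegree_le N)))
      rcases lt_or_eq_of_le hle with h | h
      · exact h
      · exfalso
        have := Polynomial.leadingCoeff_ne_zero.mpr hRne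
        rw [Polynomial.leadingCoeff, h] at this
        exact this hRcoeff
    have hevalR : ∀ x : ℝ, R.eval x = ∑ k ∈ Finset.range N, R.coeff k * x ^ k :=
      fun x => Polynomial.eval_eq_sum_range' hRdeg x
    have hsq : ∫ x in Set.Icc (-2:ℝ) 2, (R.eval x) ^ 2 = 0 := by
      have hpt : ∀ x : ℝ, (R.eval x) ^ 2
          = ∑ k ∈ Finset.range N, R.coeff k * (x ^ k * R.eval x) := by
        intro x
        calc (R.eval x) ^ 2 = R.eval x * R.eval x := sq (R.eval x) ▸ rfl
          _ = (∑ k ∈ Finset.range N, R.coeff k * x ^ k) * R.eval x := by rw [← hevalR]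
          _ = ∑ k ∈ Finset.range N, R.coeff k * (x ^ k * R.eval x) := by
              rw [Finset.sum_mul]
              exact Finset.sum_congr rfl fun k _ => by ring
      simp_rw [hpt]
      rw [MeasureTheory.integral_finset_sum]
      · refine Finset.sum_eq_zero fun k hk => ?_
        rw [MeasureTheory.integral_const_mul, orthoR k (Finset.mem_range.mp hk), mul_zero]
      · intro k _
        exact (integrableOn_Icc_poly _
          ((continuous_pow k).mul (Polynomial.continuous R))).const_mul _
    have hae : (fun x => (R.eval x) ^ 2) =ᵐ[volume.restrict (Set.Icc (-2:ℝ) 2)] 0 := by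
      rw [← MeasureTheory.integral_eq_zero_iff_of_nonneg_ae]
      · exact hsq
      · exact Filter.Eventually.of_forall fun x => sq_nonneg _
      · exact integrableOn_Icc_poly _ ((Polynomial.continuous R).pow 2)
    have hnull : volume ({x : ℝ | R.eval x ≠ 0} ∩ Set.Icc (-2:ℝ) 2) = 0 := by
      have hmeas : MeasurableSet {x : ℝ | R.eval x ≠ 0} :=
        ((Polynomial.continuous R).measurable (measurableSet_singleton 0).compl)
      have h0 : (volume.restrict (Set.Icc (-2:ℝ) 2)) {x : ℝ | R.eval x ≠ 0} = 0 := by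
        have h' := hae
        rw [Filter.EventuallyEq, MeasureTheory.ae_iff] at h'
        have hset : {a : ℝ | ¬ (fun x => (R.eval x)^2) a = (0 : ℝ → ℝ) a}
            = {x : ℝ | R.eval x ≠ 0} := by
          ext x
          simp [pow_eq_zero_iff]
        rwa [hset] at h'
      rwa [MeasureTheory.Measure.restrict_apply hmeas] at h0
    have hroots : volume {x : ℝ | R.IsRoot x} = 0 :=
      (Polynomial.finite_setOf_isRoot hRne).measure_zero volume
    have hcover : Set.Icc (-2:ℝ) 2 ⊆
        ({x : ℝ | R.eval x ≠ 0} ∩ Set.Icc (-2:ℝ) 2) ∪ {x : ℝ | R.IsRoot x} := by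
      intro x hx
      by_cases h : R.eval x = 0
      · exact Or.inr h
      · exact Or.inl ⟨h, hx⟩
    have : volume (Set.Icc (-2:ℝ) 2) = 0 := by
      refine le_antisymm ?_ (zero_le)
      calc volume (Set.Icc (-2:ℝ) 2)
          ≤ volume (({x : ℝ | R.eval x ≠ 0} ∩ Set.Icc (-2:ℝ) 2) ∪ {x : ℝ | R.IsRoot x}) :=
            measure_mono hcover
        _ ≤ _ := measure_union_le _ _
        _ = 0 := by rw [hnull, hroots, add_zero]
    rw [Real.volume_Icc] at this
    norm_num at this
  -- conclude
  have hPQ : ∀ x : ℝ, (Ppoly N).eval x = c0 * Q.eval x := by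
    intro x
    have : Ppoly N = C c0 * Q := by
      have := sub_eq_zero.mp hRzero
      exact this
    rw [this, Polynomial.eval_mul, Polynomial.eval_C]
  refine ⟨c0 / N.factorial, by positivity, fun x => ?_⟩
  have hint : (∫ t in (Set.univ.pi (fun _ => Set.Icc (-2 : ℝ) 2) : Set (Fin N → ℝ)),
      (∏ i : Fin N, ∏ j ∈ Finset.Ioi i, (t i - t j) ^ 2) * ∏ j : Fin N, (x - t j))
      = (Ppoly N).eval x := by
    rw [Ppoly_eval]
    rfl
  rw [hint, hPQ x]
  have : (derivative^[N] ((X ^ 2 - 4 : ℝ[X]) ^ N)) = Q := rfl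
  rw [this]
  have hfac : (0:ℝ) < N.factorial := by exact_mod_cast N.factorial_pos
  field_simp

end AuxLegendre
end AuxLegendre
end

section
/- Let N ≥ 1 be an integer and define f_N : ℝ → ℝ by f_N(x) = ∫_{[−2,2]^N} ∏_{1≤i<j≤N}(t_i − t_j)² · ∏_{j=1}^{N}(x − t_j) dt₁⋯dt_N. Then f_N is a polynomial function of x and satisfies, for every x ∈ ℝ, (4 − x²)·f_N″(x) − 2x·f_N′(x) + N(N+1)·f_N(x) = 0. Equivalently, with ℏ = 1/N, the function f_N satisfies the quantum curve equation (4 − x²)ℏ²·f_N″ − 2xℏ²·f_N′ + (1 + ℏ)·f_N = 0. (This is the content of the paper's quantum curve theorem for the wave function of the Θ-Gromov–Witten invariants of P¹ at ℏ = 1/N.) -/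
open MeasureTheory

namespace LEQC
open Finset

noncomputable section

variable {N : ℕ}

def cube (N : ℕ) : Set (Fin N → ℝ) := Set.univ.pi fun _ => Set.Icc (-2) 2

def Vf (t : Fin N → ℝ) : ℝ := ∏ i, ∏ j ∈ Ioi i, (t i - t j) ^ 2

def pairs (N : ℕ) : Finset ((_ : Fin N) × Fin N) := univ.sigma fun i => Ioi i

def bcoef (A : Finset (Fin N)) (t : Fin N → ℝ) : ℝ := ∏ i ∈ univ \ A, (-t i)

def e0 (x : ℝ) (t : Fin N → ℝ) : ℝ := ∏ i, (x - t i)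

def e1 (x : ℝ) (t : Fin N → ℝ) : ℝ :=
  ∑ A ∈ (univ : Finset (Fin N)).powerset, bcoef A t * (#A * x ^ (#A - 1))

def e2 (x : ℝ) (t : Fin N → ℝ) : ℝ :=
  ∑ A ∈ (univ : Finset (Fin N)).powerset,
    bcoef A t * (#A * (((#A - 1 : ℕ) : ℝ) * x ^ (#A - 2)))

lemma Vf_eq_pairs (t : Fin N → ℝ) : Vf t = ∏ p ∈ pairs N, (t p.1 - t p.2) ^ 2 := by
  rw [Vf, pairs, Finset.prod_sigma]

lemma mem_pairs {p : (_ : Fin N) × Fin N} : p ∈ pairs N ↔ p.1 < p.2 := by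
  cases p; simp [pairs, Finset.mem_sigma]

lemma continuous_Vf : Continuous (Vf (N := N)) := by
  apply continuous_finset_prod; intro i _
  apply continuous_finset_prod; intro j _
  exact ((continuous_apply i).sub (continuous_apply j)).pow 2

lemma continuous_bcoef (A : Finset (Fin N)) : Continuous (bcoef A) := by
  apply continuous_finset_prod; intro i _
  exact (continuous_apply i).neg

lemma continuous_e0 (x : ℝ) : Continuous (e0 (N := N) x) := by
  apply continuous_finset_prod; intro i _
  exact continuous_const.sub (continuous_apply i)

lemma continuous_e1 (x : ℝ) : Continuous (e1 (N := N) x) := by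
  apply continuous_finset_sum; intro A _
  exact (continuous_bcoef A).mul continuous_const

lemma continuous_e2 (x : ℝ) : Continuous (e2 (N := N) x) := by
  apply continuous_finset_sum; intro A _
  exact (continuous_bcoef A).mul continuous_const

lemma isCompact_cube : IsCompact (cube N) := isCompact_univ_pi fun _ => isCompact_Icc

lemma measurableSet_cube : MeasurableSet (cube N) :=
  MeasurableSet.univ_pi fun _ => measurableSet_Icc

lemma integrableOn_cube {f : (Fin N → ℝ) → ℝ} (hf : Continuous f) :
    IntegrableOn f (cube N) volume :=
  hf.continuousOn.integrableOn_compact isCompact_cube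

def cA (N : ℕ) (A : Finset (Fin N)) : ℝ := ∫ t in cube N, Vf t * bcoef A t

def pN (N : ℕ) : Polynomial ℝ :=
  ∑ A ∈ (univ : Finset (Fin N)).powerset, Polynomial.C (cA N A) * Polynomial.X ^ #A

lemma e0_eq_sum (x : ℝ) (t : Fin N → ℝ) :
    e0 x t = ∑ A ∈ (univ : Finset (Fin N)).powerset, x ^ #A * bcoef A t := by
  have h := Finset.prod_add (fun _ : Fin N => x) (fun i => -(t i)) univ
  simpa [e0, sub_eq_add_neg, bcoef] using h

lemma swap_int (r : Finset (Fin N) → ℝ) :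
    ∑ A ∈ (univ : Finset (Fin N)).powerset, cA N A * r A
      = ∫ t in cube N, Vf t * ∑ A ∈ (univ : Finset (Fin N)).powerset, bcoef A t * r A := by
  have h1 : ∀ A ∈ (univ : Finset (Fin N)).powerset,
      Integrable (fun t => (Vf t * bcoef A t) * r A) (volume.restrict (cube N)) := by
    intro A _
    exact (integrableOn_cube (continuous_Vf.mul (continuous_bcoef A))).mul_const (r A)
  calc ∑ A ∈ (univ : Finset (Fin N)).powerset, cA N A * r A
      = ∑ A ∈ (univ : Finset (Fin N)).powerset,
          ∫ t in cube N, (Vf t * bcoef A t) * r A := by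
        exact Finset.sum_congr rfl fun A _ => (integral_mul_const _ _).symm
    _ = ∫ t in cube N, ∑ A ∈ (univ : Finset (Fin N)).powerset, (Vf t * bcoef A t) * r A :=
        (integral_finset_sum _ h1).symm
    _ = _ := by
        apply integral_congr_ae; filter_upwards with t
        simp [Finset.mul_sum, mul_assoc]

lemma F_eq_poly (x : ℝ) : (∫ t in cube N, Vf t * e0 x t) = (pN N).eval x := by
  have := swap_int (N := N) (fun A => x ^ #A)
  rw [pN]
  simp only [Polynomial.eval_finset_sum, Polynomial.eval_mul, Polynomial.eval_C,
    Polynomial.eval_pow, Polynomial.eval_X]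
  rw [this]
  apply integral_congr_ae; filter_upwards with t
  rw [e0_eq_sum]
  congr 1; exact Finset.sum_congr rfl fun A _ => mul_comm _ _

lemma eval_deriv1 (x : ℝ) :
    (Polynomial.derivative (pN N)).eval x = ∫ t in cube N, Vf t * e1 x t := by
  have := swap_int (N := N) (fun A => (#A : ℝ) * x ^ (#A - 1))
  rw [pN]
  simp only [Polynomial.derivative_sum, Polynomial.derivative_C_mul, Polynomial.derivative_X_pow,
    Polynomial.eval_finset_sum, Polynomial.eval_mul, Polynomial.eval_C, Polynomial.eval_pow,
    Polynomial.eval_X, ← mul_assoc]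
  simp only [e1] at this ⊢
  rw [← this]
  exact Finset.sum_congr rfl fun A _ => by ring

lemma eval_deriv2 (x : ℝ) :
    (Polynomial.derivative (Polynomial.derivative (pN N))).eval x
      = ∫ t in cube N, Vf t * e2 x t := by
  have := swap_int (N := N) (fun A => (#A : ℝ) * (((#A - 1 : ℕ) : ℝ) * x ^ (#A - 2)))
  rw [pN]
  simp only [Polynomial.derivative_sum, Polynomial.derivative_C_mul, Polynomial.derivative_X_pow,
    Polynomial.eval_finset_sum, Polynomial.eval_mul, Polynomial.eval_C, Polynomial.eval_pow,
    Polynomial.eval_X, Nat.sub_sub, Nat.reduceAdd]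
  simp only [e2] at this ⊢
  rw [← this]

lemma hasDerivAt_e0 (x : ℝ) (t : Fin N → ℝ) :
    HasDerivAt (fun y => e0 y t) (∑ i, ∏ k ∈ univ.erase i, (x - t k)) x := by
  have h := HasDerivAt.fun_finsetProd (u := (univ : Finset (Fin N)))
    (f := fun i y => y - t i) (f' := fun _ => 1) (x := x)
    (fun i _ => (hasDerivAt_id x).sub_const (t i))
  simpa [e0] using h

lemma hasDerivAt_e0' (x : ℝ) (t : Fin N → ℝ) :
    HasDerivAt (fun y => e0 y t) (e1 x t) x := by
  have hfun : (fun y => e0 y t)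
      = fun y => ∑ A ∈ (univ : Finset (Fin N)).powerset, y ^ #A * bcoef A t :=
    funext fun y => e0_eq_sum y t
  rw [hfun, e1]
  apply HasDerivAt.fun_sum
  intro A _
  have h := (hasDerivAt_pow #A x).mul_const (bcoef A t)
  refine h.congr_deriv ?_
  ring

lemma e1_eq (x : ℝ) (t : Fin N → ℝ) :
    e1 x t = ∑ i, ∏ k ∈ univ.erase i, (x - t k) :=
  (hasDerivAt_e0' x t).unique (hasDerivAt_e0 x t)

lemma hasDerivAt_e1a (x : ℝ) (t : Fin N → ℝ) :
    HasDerivAt (fun y => e1 y t)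
      (∑ i, ∑ k ∈ univ.erase i, ∏ l ∈ (univ.erase i).erase k, (x - t l)) x := by
  have hfun : (fun y => e1 y t) = fun y => ∑ i, ∏ k ∈ univ.erase i, (y - t k) :=
    funext fun y => e1_eq y t
  rw [hfun]
  apply HasDerivAt.fun_sum
  intro i _
  have h := HasDerivAt.fun_finsetProd (u := (univ : Finset (Fin N)).erase i)
    (f := fun k y => y - t k) (f' := fun _ => 1) (x := x)
    (fun k _ => (hasDerivAt_id x).sub_const (t k))
  simpa using h

lemma hasDerivAt_e1b (x : ℝ) (t : Fin N → ℝ) :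
    HasDerivAt (fun y => e1 y t) (e2 x t) x := by
  simp only [e1, e2]
  apply HasDerivAt.fun_sum
  intro A _
  have hfe : (fun y => bcoef A t * ((#A : ℝ) * y ^ (#A - 1)))
      = fun y => (bcoef A t * (#A : ℝ)) * y ^ (#A - 1) := funext fun y => by ring
  rw [hfe]
  have h := (hasDerivAt_pow (#A - 1) x).const_mul (bcoef A t * (#A : ℝ))
  simp only [Nat.sub_sub, Nat.reduceAdd] at h
  refine h.congr_deriv ?_
  ring

lemma e2_eq (x : ℝ) (t : Fin N → ℝ) :
    e2 x t = ∑ i, ∑ k ∈ univ.erase i, ∏ l ∈ (univ.erase i).erase k, (x - t l) :=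
  (hasDerivAt_e1b x t).unique (hasDerivAt_e1a x t)

def Qf (x : ℝ) (j : Fin N) (t : Fin N → ℝ) : ℝ := ∏ i ∈ univ.erase j, (x - t i)

def dj (j i : Fin N) : ℝ := if i = j then 1 else 0

def DV (j : Fin N) (t : Fin N → ℝ) : ℝ :=
  ∑ p ∈ pairs N, (∏ q ∈ (pairs N).erase p, (t q.1 - t q.2) ^ 2)
    * (2 * (t p.1 - t p.2) * (dj j p.1 - dj j p.2))

def Df (x : ℝ) (j : Fin N) (t : Fin N → ℝ) : ℝ :=
  ((-2 * t j) * Vf t + (4 - t j ^ 2) * DV j t) * Qf x j t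

def gf (x : ℝ) (j : Fin N) (t : Fin N → ℝ) : ℝ := (4 - t j ^ 2) * Vf t * Qf x j t

lemma continuous_Qf (x : ℝ) (j : Fin N) : Continuous (Qf x j) := by
  apply continuous_finset_prod; intro i _
  exact continuous_const.sub (continuous_apply i)

lemma continuous_DV (j : Fin N) : Continuous (DV (N := N) j) := by
  apply continuous_finset_sum; intro p _
  apply Continuous.mul
  · apply continuous_finset_prod; intro q _
    exact ((continuous_apply q.1).sub (continuous_apply q.2)).pow 2
  · apply Continuous.mul
    · exact continuous_const.mul ((continuous_apply p.1).sub (continuous_apply p.2))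
    · exact continuous_const
lemma continuous_Df (x : ℝ) (j : Fin N) : Continuous (Df x j) := by
  apply Continuous.mul _ (continuous_Qf x j)
  apply Continuous.add
  · exact (continuous_const.mul (continuous_apply j)).mul continuous_Vf
  · exact (continuous_const.sub ((continuous_apply j).pow 2)).mul (continuous_DV j)

lemma Qf_update (x : ℝ) (j : Fin N) (t : Fin N → ℝ) (s : ℝ) :
    Qf x j (Function.update t j s) = Qf x j t := by
  refine Finset.prod_congr rfl fun i hi => ?_
  rw [Function.update_of_ne (Finset.ne_of_mem_erase hi)]

lemma hasDerivAt_slice (x : ℝ) (t : Fin N → ℝ) (j : Fin N) :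
    HasDerivAt (fun s => gf x j (Function.update t j s)) (Df x j t) (t j) := by
  have hV : HasDerivAt (fun s => Vf (Function.update t j s)) (DV j t) (t j) := by
    have hfun : (fun s => Vf (Function.update t j s))
        = fun s => ∏ p ∈ pairs N,
            ((Function.update t j s) p.1 - (Function.update t j s) p.2) ^ 2 :=
      funext fun s => Vf_eq_pairs _
    rw [hfun, DV]
    have hper : ∀ p ∈ pairs N,
        HasDerivAt (fun s => ((Function.update t j s) p.1 - (Function.update t j s) p.2) ^ 2)
          (2 * (t p.1 - t p.2) * (dj j p.1 - dj j p.2)) (t j) := by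
      intro p hp
      have hne : p.1 ≠ p.2 := (mem_pairs.1 hp).ne
      simp only [Function.update_apply]
      by_cases h1 : p.1 = j <;> by_cases h2 : p.2 = j
      · exact absurd (h1.trans h2.symm) hne
      · simp only [if_pos h1, if_neg h2]
        have base := ((hasDerivAt_id (t j)).sub_const (t p.2)).pow 2
        refine base.congr_deriv ?_
        simp [dj, h1, h2, hne]
      · simp only [if_neg h1, if_pos h2]
        have base := (((hasDerivAt_id (t j)).const_sub (t p.1))).pow 2
        refine base.congr_deriv ?_
        simp [dj, h1, h2]
      · simp only [if_neg h1, if_neg h2]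
        have base := hasDerivAt_const (t j) ((t p.1 - t p.2) ^ 2)
        refine base.congr_deriv ?_
        simp [dj, h1, h2]
    have h := HasDerivAt.fun_finsetProd hper
    have hupd : Function.update t j (t j) = t := Function.update_eq_self j t
    simp only [hupd, smul_eq_mul] at h
    exact h
  have h4 : HasDerivAt (fun s : ℝ => 4 - s ^ 2) (-2 * t j) (t j) := by
    have := (hasDerivAt_pow 2 (t j)).const_sub 4
    refine this.congr_deriv ?_
    ring
  have hcomb := (h4.mul hV).mul_const (Qf x j t)
  have hupd : Function.update t j (t j) = t := Function.update_eq_self j t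
  simp only [hupd] at hcomb
  have hfun2 : (fun s => gf x j (Function.update t j s))
      = fun s => ((4 - s ^ 2) * Vf (Function.update t j s)) * Qf x j t := by
    funext s
    simp [gf, Function.update_self, Qf_update, mul_assoc]
  rw [hfun2, Df]
  exact hcomb

lemma hasDerivAt_slice' (x : ℝ) (t : Fin N → ℝ) (j : Fin N) (s : ℝ) :
    HasDerivAt (fun s' => gf x j (Function.update t j s'))
      (Df x j (Function.update t j s)) s := by
  have h := hasDerivAt_slice x (Function.update t j s) j
  simp only [Function.update_idem, Function.update_self] at h
  exact h

lemma insertNth_eq_update {n : ℕ} (j : Fin (n+1)) (a : ℝ) (y : Fin n → ℝ) :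
    j.insertNth a y = Function.update (j.insertNth 0 y : Fin (n+1) → ℝ) j a := by
  funext i
  rcases eq_or_ne i j with rfl | h
  · simp [Fin.insertNth_apply_same]
  · obtain ⟨k, rfl⟩ := Fin.exists_succAbove_eq h
    rw [Function.update_of_ne (Fin.succAbove_ne j k)]
    simp [Fin.insertNth_apply_succAbove]

lemma integral_Df_zero {n : ℕ} (x : ℝ) (j : Fin (n+1)) :
    ∫ t in cube (n+1), Df x j t = 0 := by
  have hmp := (volume_preserving_piFinSuccAbove (fun _ : Fin (n+1) => ℝ) j).symm
  set e := MeasurableEquiv.piFinSuccAbove (fun _ : Fin (n+1) => ℝ) j with he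
  have hsymm : ∀ z : ℝ × (Fin n → ℝ), e.symm z = j.insertNth z.1 z.2 := by
    intro z
    simp_rw [he, MeasurableEquiv.piFinSuccAbove_symm_apply, Fin.insertNthEquiv,
      Equiv.coe_fn_mk]
  have hpre : (⇑e.symm) ⁻¹' cube (n+1) = Set.Icc (-2:ℝ) 2 ×ˢ cube n := by
    ext z
    simp only [Set.mem_preimage, hsymm, cube, Set.mem_pi, Set.mem_univ, forall_true_left,
      Set.mem_prod]
    rw [j.forall_iff_succAbove]
    simp [Fin.insertNth_apply_same, Fin.insertNth_apply_succAbove]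
  have hcont : Continuous fun z : ℝ × (Fin n → ℝ) => Df x j (j.insertNth z.1 z.2) :=
    (continuous_Df x j).comp (Continuous.finInsertNth (A := fun _ => ℝ) j continuous_fst continuous_snd)
  have key := hmp.setIntegral_preimage_emb (MeasurableEquiv.measurableEmbedding e.symm)
    (fun t => Df x j t) (cube (n+1))
  rw [← key]
  have : ∀ z : ℝ × (Fin n → ℝ), Df x j (e.symm z) = Df x j (j.insertNth z.1 z.2) := fun z => by
    rw [hsymm]
  rw [hpre]
  calc ∫ z in Set.Icc (-2:ℝ) 2 ×ˢ cube n, Df x j (e.symm z)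
      = ∫ z in Set.Icc (-2:ℝ) 2 ×ˢ cube n, Df x j (j.insertNth z.1 z.2) := by
        apply setIntegral_congr_ae ((measurableSet_Icc).prod measurableSet_cube)
        filter_upwards with z _ using this z
    _ = ∫ y in cube n, ∫ a in Set.Icc (-2:ℝ) 2, Df x j (j.insertNth a y) := by
        rw [Measure.volume_eq_prod, ← Measure.prod_restrict]
        apply integral_prod_symm
        rw [Measure.prod_restrict]
        exact hcont.continuousOn.integrableOn_compact (isCompact_Icc.prod isCompact_cube)
    _ = 0 := by
        have hzero : ∀ y : Fin n → ℝ,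
            (∫ a in Set.Icc (-2:ℝ) 2, Df x j (j.insertNth a y)) = 0 := by
          intro y
          set t₀ : Fin (n+1) → ℝ := j.insertNth 0 y with ht₀
          have hupd : ∀ a : ℝ, j.insertNth a y = Function.update t₀ j a := fun a =>
            insertNth_eq_update j a y
          simp_rw [hupd]
          rw [integral_Icc_eq_integral_Ioc,
            ← intervalIntegral.integral_of_le (by norm_num : (-2:ℝ) ≤ 2)]
          rw [intervalIntegral.integral_eq_sub_of_hasDerivAt
            (f := fun s => gf x j (Function.update t₀ j s))
            (fun s _ => hasDerivAt_slice' x t₀ j s)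
            (((continuous_Df x j).comp
              ((continuous_const.update j continuous_id))).intervalIntegrable _ _)]
          simp [gf, Function.update_self]
          norm_num
        simp_rw [hzero]
        simp

lemma null_pair (x : ℝ) (i k : Fin N) :
    volume {t : Fin N → ℝ | i ≠ k ∧ t i = t k} = 0 := by
  by_cases h : i = k
  · simp [h]
  · have hset : {t : Fin N → ℝ | i ≠ k ∧ t i = t k}
        = (LinearMap.ker ((LinearMap.proj i : (Fin N → ℝ) →ₗ[ℝ] ℝ)
            - (LinearMap.proj k : (Fin N → ℝ) →ₗ[ℝ] ℝ)) : Set (Fin N → ℝ)) := by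
      ext t
      simp [LinearMap.mem_ker, sub_eq_zero, h]
    rw [hset]
    apply MeasureTheory.Measure.addHaar_submodule
    intro hker
    have h1 : Pi.single i (1:ℝ) ∈ LinearMap.ker
        ((LinearMap.proj i : (Fin N → ℝ) →ₗ[ℝ] ℝ) - LinearMap.proj k) := by
      rw [hker]; trivial
    simp only [LinearMap.mem_ker, LinearMap.sub_apply, LinearMap.proj_apply] at h1
    rw [Pi.single_eq_same, Pi.single_eq_of_ne (Ne.symm h)] at h1
    norm_num at h1

lemma null_coord (x : ℝ) (i : Fin N) : volume {t : Fin N → ℝ | t i = x} = 0 := by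
  have h0 : volume {t : Fin N → ℝ | t i = 0} = 0 := by
    have hset : {t : Fin N → ℝ | t i = 0}
        = (LinearMap.ker (LinearMap.proj i : (Fin N → ℝ) →ₗ[ℝ] ℝ) : Set (Fin N → ℝ)) := by
      ext t; simp [LinearMap.mem_ker]
    rw [hset]
    apply MeasureTheory.Measure.addHaar_submodule
    intro hker
    have h1 : Pi.single i (1:ℝ) ∈ LinearMap.ker (LinearMap.proj i : (Fin N → ℝ) →ₗ[ℝ] ℝ) := by
      rw [hker]; trivial
    simp [LinearMap.mem_ker] at h1
  have hset : {t : Fin N → ℝ | t i = x}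
      = (fun t : Fin N → ℝ => t + fun _ => -x) ⁻¹' {t : Fin N → ℝ | t i = 0} := by
    ext t
    simp [sub_eq_zero, eq_comm]
    constructor <;> intro h <;> linarith [h]
  rw [hset, measure_preimage_add_right]
  exact h0

lemma null_bad (x : ℝ) :
    ∀ᵐ t : Fin N → ℝ, (∀ i k : Fin N, i ≠ k → t i ≠ t k) ∧ ∀ i, t i ≠ x := by
  have h1 : volume (⋃ i, ⋃ k, {t : Fin N → ℝ | i ≠ k ∧ t i = t k}) = 0 :=
    measure_iUnion_null fun i => measure_iUnion_null fun k => null_pair x i k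
  have h2 : volume (⋃ i, {t : Fin N → ℝ | t i = x}) = 0 :=
    measure_iUnion_null fun i => null_coord x i
  rw [MeasureTheory.ae_iff]
  apply measure_mono_null _ (measure_union_null h1 h2)
  intro t ht
  simp only [Set.mem_setOf_eq, not_and_or, not_forall] at ht
  rcases ht with ht | ht
  · left
    obtain ⟨i, k, hik⟩ := ht
    simp only [Set.mem_iUnion, Set.mem_setOf_eq]
    refine ⟨i, k, ?_⟩
    tauto
  · right
    obtain ⟨i, hi⟩ := ht
    simp only [Set.mem_iUnion, Set.mem_setOf_eq]
    exact ⟨i, not_not.1 hi⟩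

lemma sum_swap_erase (f : Fin N → Fin N → ℝ) :
    ∑ j, ∑ i ∈ univ.erase j, f j i = ∑ j, ∑ i ∈ univ.erase j, f i j := by
  have h : ∀ g : Fin N → Fin N → ℝ, ∑ j, ∑ i ∈ univ.erase j, g j i
      = ∑ j, ∑ i, if i = j then 0 else g j i := by
    intro g
    refine Finset.sum_congr rfl fun j _ => ?_
    rw [← Finset.add_sum_erase _ (fun i => if i = j then (0:ℝ) else g j i) (mem_univ j)]
    rw [if_pos rfl, zero_add]
    exact Finset.sum_congr rfl fun i hi => (if_neg (Finset.mem_erase.1 hi).1).symm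
  rw [h f, h (fun a b => f b a), Finset.sum_comm]
  refine Finset.sum_congr rfl fun j _ => Finset.sum_congr rfl fun i _ => ?_
  by_cases hij : i = j
  · simp [hij]
  · simp [hij, Ne.symm hij]

lemma erase_eq_Iio_union_Ioi (j : Fin N) :
    (univ : Finset (Fin N)).erase j = Finset.Iio j ∪ Finset.Ioi j := by
  ext a
  simp only [Finset.mem_erase, Finset.mem_univ, and_true, Finset.mem_union, Finset.mem_Iio,
    Finset.mem_Ioi]
  exact ne_iff_lt_or_gt

lemma dv_eq (t : Fin N → ℝ) (j : Fin N) (hd : ∀ i k : Fin N, i ≠ k → t i ≠ t k) :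
    DV j t = Vf t * ∑ i ∈ univ.erase j, 2 * (t j - t i)⁻¹ := by
  have hterm : ∀ p ∈ pairs N,
      (∏ q ∈ (pairs N).erase p, (t q.1 - t q.2) ^ 2)
          * (2 * (t p.1 - t p.2) * (dj j p.1 - dj j p.2))
        = Vf t * (2 * (dj j p.1 - dj j p.2) * (t p.1 - t p.2)⁻¹) := by
    intro p hp
    have hne : t p.1 - t p.2 ≠ 0 := sub_ne_zero.2 (hd p.1 p.2 (mem_pairs.1 hp).ne)
    rw [Vf_eq_pairs, ← Finset.mul_prod_erase (pairs N) _ hp]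
    field_simp
  rw [DV, Finset.sum_congr rfl hterm]
  have hsplit : ∀ p : (_ : Fin N) × Fin N, p ∈ pairs N →
      Vf t * (2 * (dj j p.1 - dj j p.2) * (t p.1 - t p.2)⁻¹)
        = (if p.1 = j then Vf t * (2 * (t j - t p.2)⁻¹) else 0)
          + (if p.2 = j then Vf t * (2 * (t j - t p.1)⁻¹) else 0) := by
    intro p hp
    have hne : p.1 ≠ p.2 := (mem_pairs.1 hp).ne
    by_cases h1 : p.1 = j <;> by_cases h2 : p.2 = j
    · exact absurd (h1.trans h2.symm) hne
    · subst h1; simp [dj, h2, Ne.symm h2]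
    · subst h2
      have hab : t p.1 - t p.2 ≠ 0 := sub_ne_zero.2 (hd p.1 p.2 hne)
      have hba : t p.2 - t p.1 ≠ 0 := sub_ne_zero.2 (hd p.2 p.1 (Ne.symm hne))
      simp only [dj, if_neg h1, if_pos rfl, zero_add, ↓reduceIte]
      field_simp
      ring
    · simp [dj, h1, h2]
  rw [Finset.sum_congr rfl hsplit, Finset.sum_add_distrib]
  have hA : (∑ p ∈ pairs N, if p.1 = j then Vf t * (2 * (t j - t p.2)⁻¹) else 0)
      = ∑ b ∈ Finset.Ioi j, Vf t * (2 * (t j - t b)⁻¹) := by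
    rw [pairs, Finset.sum_sigma]
    have h1 : ∀ a : Fin N, (∑ b ∈ Finset.Ioi a, if a = j then Vf t * (2 * (t j - t b)⁻¹) else 0)
        = if a = j then ∑ b ∈ Finset.Ioi a, Vf t * (2 * (t j - t b)⁻¹) else 0 := by
      intro a; split <;> simp
    rw [Finset.sum_congr rfl fun a _ => h1 a, Finset.sum_ite_eq' univ j]
    simp
  have hB : (∑ p ∈ pairs N, if p.2 = j then Vf t * (2 * (t j - t p.1)⁻¹) else 0)
      = ∑ a ∈ Finset.Iio j, Vf t * (2 * (t j - t a)⁻¹) := by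
    rw [pairs, Finset.sum_sigma]
    have h1 : ∀ a : Fin N, (∑ b ∈ Finset.Ioi a, if b = j then Vf t * (2 * (t j - t a)⁻¹) else 0)
        = if a ∈ Finset.Iio j then Vf t * (2 * (t j - t a)⁻¹) else 0 := by
      intro a
      rw [Finset.sum_ite_eq' (Finset.Ioi a) j]
      simp [Finset.mem_Ioi, Finset.mem_Iio]
    rw [Finset.sum_congr rfl fun a _ => h1 a, Finset.sum_ite_mem]
    simp
  rw [hA, hB, erase_eq_Iio_union_Ioi]
  have hdisj : Disjoint (Finset.Iio j) (Finset.Ioi j) := by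
    rw [Finset.disjoint_left]
    intro a ha ha'
    exact absurd (Finset.mem_Ioi.1 ha') (not_lt.2 (le_of_lt (Finset.mem_Iio.1 ha)))
  rw [Finset.sum_union hdisj, mul_add, Finset.mul_sum, Finset.mul_sum]
  ring

lemma key_identity (hN : 1 ≤ N) (x : ℝ) (t : Fin N → ℝ)
    (hd : ∀ i k : Fin N, i ≠ k → t i ≠ t k) (hx : ∀ i, t i ≠ x) :
    Vf t * ((4 - x ^ 2) * e2 x t - 2 * x * e1 x t + ((N:ℝ) * ((N:ℝ) + 1)) * e0 x t)
      = ∑ j, Df x j t := by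
  have hux : ∀ i, x - t i ≠ 0 := fun i => sub_ne_zero.2 (Ne.symm (hx i))
  have hQ : ∀ j : Fin N, (∏ i ∈ univ.erase j, (x - t i))
      = (∏ i, (x - t i)) * (x - t j)⁻¹ := by
    intro j
    have h1 := Finset.mul_prod_erase univ (fun i => x - t i) (Finset.mem_univ j)
    calc (∏ i ∈ univ.erase j, (x - t i))
        = (x - t j)⁻¹ * ((x - t j) * ∏ i ∈ univ.erase j, (x - t i)) :=
          (inv_mul_cancel_left₀ (hux j) _).symm
      _ = (x - t j)⁻¹ * ∏ i, (x - t i) := by rw [h1]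
      _ = _ := by ring
  have hQ2 : ∀ i : Fin N, ∀ k ∈ univ.erase i, (∏ l ∈ (univ.erase i).erase k, (x - t l))
      = (∏ l, (x - t l)) * ((x - t i)⁻¹ * (x - t k)⁻¹) := by
    intro i k hk
    have h1 := Finset.mul_prod_erase (univ.erase i) (fun l => x - t l) hk
    calc (∏ l ∈ (univ.erase i).erase k, (x - t l))
        = (x - t k)⁻¹ * ((x - t k) * ∏ l ∈ (univ.erase i).erase k, (x - t l)) :=
          (inv_mul_cancel_left₀ (hux k) _).symm
      _ = (x - t k)⁻¹ * ∏ l ∈ univ.erase i, (x - t l) := by rw [h1]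
      _ = (x - t k)⁻¹ * ((∏ l, (x - t l)) * (x - t i)⁻¹) := by rw [hQ i]
      _ = _ := by ring
  set P : ℝ := ∏ i, (x - t i) with hPdef
  set S1 : ℝ := ∑ i, (x - t i)⁻¹ with hS1def
  set S2 : ℝ := ∑ i, ∑ k ∈ univ.erase i, (x - t i)⁻¹ * (x - t k)⁻¹ with hS2def
  have hA : e0 x t = P := rfl
  have hB : e1 x t = P * S1 := by
    rw [e1_eq, hS1def, Finset.mul_sum]
    exact Finset.sum_congr rfl fun i _ => hQ i
  have hC : e2 x t = P * S2 := by
    rw [e2_eq, hS2def, Finset.mul_sum]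
    refine Finset.sum_congr rfl fun i _ => ?_
    rw [Finset.mul_sum]
    exact Finset.sum_congr rfl fun k hk => hQ2 i k hk
  have hD : ∑ j, Df x j t
      = Vf t * P * (∑ j, -2 * t j * (x - t j)⁻¹)
        + Vf t * P * (∑ j, ∑ i ∈ univ.erase j,
            (4 - t j ^ 2) * (x - t j)⁻¹ * (2 * (t j - t i)⁻¹)) := by
    rw [Finset.mul_sum, Finset.mul_sum, ← Finset.sum_add_distrib]
    refine Finset.sum_congr rfl fun j _ => ?_
    rw [Df, dv_eq t j hd]
    have hQj : Qf x j t = P * (x - t j)⁻¹ := hQ j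
    rw [hQj]
    simp only [add_mul]
    congr 1
    · ring
    · simp only [Finset.mul_sum, Finset.sum_mul]
      exact Finset.sum_congr rfl fun i _ => by ring
  have hsplitsum : ∀ (Fc Gc : Fin N → Fin N → ℝ),
      (∑ j, ∑ i ∈ univ.erase j, (Fc j i + Gc j i))
        = (∑ j, ∑ i ∈ univ.erase j, Fc j i) + ∑ j, ∑ i ∈ univ.erase j, Gc j i := by
    intro Fc Gc
    rw [← Finset.sum_add_distrib]
    exact Finset.sum_congr rfl fun j _ => Finset.sum_add_distrib
  have hE : (∑ j, -2 * t j * (x - t j)⁻¹) = (N:ℝ) * 2 - 2 * x * S1 := by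
    have hterm : ∀ j : Fin N, -2 * t j * (x - t j)⁻¹ = 2 - 2 * x * (x - t j)⁻¹ := by
      intro j
      have := hux j
      field_simp
      ring
    rw [Finset.sum_congr rfl fun j _ => hterm j, Finset.sum_sub_distrib, Finset.sum_const,
      Finset.card_univ, Fintype.card_fin, nsmul_eq_mul, hS1def, Finset.mul_sum]
  have hcount : ∑ j : Fin N, ∑ i ∈ univ.erase j, (1:ℝ) = (N:ℝ) * ((N:ℝ) - 1) := by
    have hcard : ∀ j : Fin N, (((univ : Finset (Fin N)).erase j).card : ℝ) = (N:ℝ) - 1 := by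
      intro j
      rw [Finset.card_erase_of_mem (Finset.mem_univ j), Finset.card_univ, Fintype.card_fin,
        Nat.cast_sub hN]
      simp
    calc ∑ j : Fin N, ∑ i ∈ univ.erase j, (1:ℝ)
        = ∑ j : Fin N, (((univ : Finset (Fin N)).erase j).card : ℝ) := by simp
      _ = ∑ _j : Fin N, ((N:ℝ) - 1) := Finset.sum_congr rfl fun j _ => hcard j
      _ = (N:ℝ) * ((N:ℝ) - 1) := by
          rw [Finset.sum_const, Finset.card_univ, Fintype.card_fin, nsmul_eq_mul]
  have hF : (∑ j, ∑ i ∈ univ.erase j, (4 - t j ^ 2) * (x - t j)⁻¹ * (2 * (t j - t i)⁻¹))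
      = (4 - x ^ 2) * S2 + (N:ℝ) * ((N:ℝ) - 1) := by
    have hswap : (∑ j, ∑ i ∈ univ.erase j, (4 - t j ^ 2) * (x - t j)⁻¹ * (2 * (t j - t i)⁻¹))
        = ∑ j, ∑ i ∈ univ.erase j, (4 - t i ^ 2) * (x - t i)⁻¹ * (2 * (t i - t j)⁻¹) :=
      sum_swap_erase _
    have hpair : ∀ j : Fin N, ∀ i ∈ univ.erase j,
        (4 - t j ^ 2) * (x - t j)⁻¹ * (2 * (t j - t i)⁻¹)
          + (4 - t i ^ 2) * (x - t i)⁻¹ * (2 * (t i - t j)⁻¹)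
        = 2 * (4 - x ^ 2) * ((x - t j)⁻¹ * (x - t i)⁻¹) + 2 * 1 := by
      intro j i hi
      have hij : i ≠ j := (Finset.mem_erase.1 hi).1
      have h1 : t j - t i ≠ 0 := sub_ne_zero.2 (hd j i (Ne.symm hij))
      have h2 : t i - t j ≠ 0 := sub_ne_zero.2 (hd i j hij)
      have h3 := hux i
      have h4 := hux j
      field_simp
      ring
    have htot : (∑ j, ∑ i ∈ univ.erase j, (4 - t j ^ 2) * (x - t j)⁻¹ * (2 * (t j - t i)⁻¹))
          + (∑ j, ∑ i ∈ univ.erase j, (4 - t i ^ 2) * (x - t i)⁻¹ * (2 * (t i - t j)⁻¹))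
        = 2 * ((4 - x ^ 2) * S2 + (N:ℝ) * ((N:ℝ) - 1)) := by
      rw [← hsplitsum]
      rw [Finset.sum_congr rfl fun j _ => Finset.sum_congr rfl fun i hi => hpair j i hi]
      rw [hsplitsum]
      have hfirst : (∑ j, ∑ i ∈ univ.erase j,
          2 * (4 - x ^ 2) * ((x - t j)⁻¹ * (x - t i)⁻¹)) = 2 * (4 - x ^ 2) * S2 := by
        rw [hS2def, Finset.mul_sum]
        exact Finset.sum_congr rfl fun j _ => by rw [Finset.mul_sum]
      have hsecond : (∑ j : Fin N, ∑ i ∈ univ.erase j, (2 * 1 : ℝ)) = 2 * ((N:ℝ) * ((N:ℝ) - 1)) := by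
        rw [← hcount, Finset.mul_sum]
        exact Finset.sum_congr rfl fun j _ => by rw [Finset.mul_sum]
      rw [hfirst, hsecond]
      ring
    have h2T : 2 * (∑ j, ∑ i ∈ univ.erase j, (4 - t j ^ 2) * (x - t j)⁻¹ * (2 * (t j - t i)⁻¹))
        = 2 * ((4 - x ^ 2) * S2 + (N:ℝ) * ((N:ℝ) - 1)) := by
      rw [two_mul]
      nth_rewrite 2 [hswap]
      exact htot
    exact mul_left_cancel₀ two_ne_zero h2T
  rw [hA, hB, hC, hD, hE, hF]
  ring

end
end LEQC

/-- quantum curve for the Θ-Gromov–Witten wave function at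
`ℏ = 1/N`: for `N ≥ 1`, the function
`f_N(x) = ∫_{[−2,2]^N} ∏_{i<j}(t_i − t_j)² · ∏_j (x − t_j) dt`
is a polynomial function of `x` and satisfies the (rescaled) Legendre
differential equation `(4 − x²)·f_N″ − 2x·f_N′ + N(N+1)·f_N = 0`. -/
theorem legendre_ensemble_quantum_curve (N : ℕ) (hN : 1 ≤ N) (F : ℝ → ℝ)
    (hF : ∀ x : ℝ, F x =
      ∫ t in (Set.univ.pi (fun _ => Set.Icc (-2 : ℝ) 2) : Set (Fin N → ℝ)),
        (∏ i : Fin N, ∏ j ∈ Finset.Ioi i, (t i - t j) ^ 2) * ∏ j : Fin N, (x - t j)) :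
    (∃ p : Polynomial ℝ, ∀ x : ℝ, F x = p.eval x) ∧
    ∀ x : ℝ,
      (4 - x ^ 2) * deriv (deriv F) x - 2 * x * deriv F x + (N : ℝ) * ((N : ℝ) + 1) * F x
        = 0 := by
  obtain ⟨n, rfl⟩ : ∃ n, N = n + 1 := ⟨N - 1, (Nat.succ_pred_eq_of_pos hN).symm⟩
  have hF' : ∀ x : ℝ, F x = ∫ t in LEQC.cube (n+1), LEQC.Vf t * LEQC.e0 x t := hF
  have part1 : ∀ x : ℝ, F x = (LEQC.pN (n+1)).eval x := fun x =>
    (hF' x).trans (LEQC.F_eq_poly x)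
  have hFfun : F = fun y => (LEQC.pN (n+1)).eval y := funext part1
  refine ⟨⟨LEQC.pN (n+1), part1⟩, ?_⟩
  intro x
  have hd1 : deriv F = fun y => (Polynomial.derivative (LEQC.pN (n+1))).eval y := by
    funext y
    rw [hFfun]
    exact Polynomial.deriv (p := LEQC.pN (n+1))
  have hd1x : deriv F x = (Polynomial.derivative (LEQC.pN (n+1))).eval x := by rw [hd1]
  have hd2x : deriv (deriv F) x
      = (Polynomial.derivative (Polynomial.derivative (LEQC.pN (n+1)))).eval x := by
    rw [hd1]
    exact Polynomial.deriv (p := Polynomial.derivative (LEQC.pN (n+1)))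
  rw [hd2x, hd1x, hF' x, LEQC.eval_deriv2, LEQC.eval_deriv1]
  have hi0 : IntegrableOn (fun t => LEQC.Vf t * LEQC.e0 x t) (LEQC.cube (n+1)) volume :=
    LEQC.integrableOn_cube (LEQC.continuous_Vf.mul (LEQC.continuous_e0 x))
  have hi1 : IntegrableOn (fun t => LEQC.Vf t * LEQC.e1 x t) (LEQC.cube (n+1)) volume :=
    LEQC.integrableOn_cube (LEQC.continuous_Vf.mul (LEQC.continuous_e1 x))
  have hi2 : IntegrableOn (fun t => LEQC.Vf t * LEQC.e2 x t) (LEQC.cube (n+1)) volume :=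
    LEQC.integrableOn_cube (LEQC.continuous_Vf.mul (LEQC.continuous_e2 x))
  have hcomb : (4 - x ^ 2) * (∫ t in LEQC.cube (n+1), LEQC.Vf t * LEQC.e2 x t)
        - 2 * x * (∫ t in LEQC.cube (n+1), LEQC.Vf t * LEQC.e1 x t)
        + ((n+1 : ℕ) : ℝ) * (((n+1 : ℕ) : ℝ) + 1)
            * (∫ t in LEQC.cube (n+1), LEQC.Vf t * LEQC.e0 x t)
      = ∫ t in LEQC.cube (n+1),
          ((4 - x ^ 2) * (LEQC.Vf t * LEQC.e2 x t) - 2 * x * (LEQC.Vf t * LEQC.e1 x t)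
            + ((n+1 : ℕ) : ℝ) * (((n+1 : ℕ) : ℝ) + 1) * (LEQC.Vf t * LEQC.e0 x t)) := by
    have ha : Integrable (fun t => (4 - x ^ 2) * (LEQC.Vf t * LEQC.e2 x t))
        (volume.restrict (LEQC.cube (n+1))) := hi2.const_mul _
    have hb : Integrable (fun t => 2 * x * (LEQC.Vf t * LEQC.e1 x t))
        (volume.restrict (LEQC.cube (n+1))) := hi1.const_mul _
    have hc : Integrable (fun t => ((n+1 : ℕ) : ℝ) * (((n+1 : ℕ) : ℝ) + 1)
        * (LEQC.Vf t * LEQC.e0 x t)) (volume.restrict (LEQC.cube (n+1))) := hi0.const_mul _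
    have hab : Integrable (fun t => (4 - x ^ 2) * (LEQC.Vf t * LEQC.e2 x t)
        - 2 * x * (LEQC.Vf t * LEQC.e1 x t)) (volume.restrict (LEQC.cube (n+1))) := ha.sub hb
    rw [integral_add hab hc, integral_sub ha hb, integral_const_mul, integral_const_mul,
      integral_const_mul]
  rw [hcomb]
  have heq : (∫ t in LEQC.cube (n+1),
        ((4 - x ^ 2) * (LEQC.Vf t * LEQC.e2 x t) - 2 * x * (LEQC.Vf t * LEQC.e1 x t)
          + ((n+1 : ℕ) : ℝ) * (((n+1 : ℕ) : ℝ) + 1) * (LEQC.Vf t * LEQC.e0 x t)))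
      = ∫ t in LEQC.cube (n+1), ∑ j, LEQC.Df x j t := by
    apply setIntegral_congr_ae LEQC.measurableSet_cube
    filter_upwards [LEQC.null_bad x] with t ht _
    have hkey := LEQC.key_identity (Nat.succ_le_succ (Nat.zero_le n)) x t ht.1 ht.2
    rw [← hkey]
    ring
  rw [heq, integral_finset_sum _ (fun j _ => LEQC.integrableOn_cube (LEQC.continuous_Df x j))]
  simp [LEQC.integral_Df_zero]
end

section
/- Let ℏ be a nonzero real number and let ψ : (0, ∞) → ℝ be twice differentiable. Define ψ̂ : (0, ∞) → ℝ by ψ̂(x) = x^{−1/ℏ}·ψ(x). Then ψ̂ is twice differentiable and for every x > 0, (4 − x²)ℏ²·ψ̂″(x) − 2xℏ·(1 + ℏ − 4/x²)·ψ̂′(x) + (4/x²)(1 − ℏ)·ψ̂(x) = x^{−1/ℏ}·[ (4 − x²)ℏ²·ψ″(x) − 2xℏ²·ψ′(x) + (1 + ℏ)·ψ(x) ]. In particular, if ψ satisfies the quantum curve equation (4 − x²)ℏ²ψ″ − 2xℏ²ψ′ + (1 + ℏ)ψ = 0 on (0, ∞), then ψ̂ satisfies (4 − x²)ℏ²ψ̂″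 − 2xℏ(1 + ℏ − 4/x²)ψ̂′ + (4/x²)(1 − ℏ)ψ̂ = 0 on (0, ∞). -/
/-- for `ℏ ≠ 0` and `ψ` twice differentiable on `(0, ∞)`, the
function `ψ̂(x) = x^{−1/ℏ}·ψ(x)` is twice differentiable on `(0, ∞)` and
satisfies, for every `x > 0`,
`(4 − x²)ℏ²ψ̂″ − 2xℏ(1 + ℏ − 4/x²)ψ̂′ + (4/x²)(1 − ℏ)ψ̂
  = x^{−1/ℏ}·[(4 − x²)ℏ²ψ″ − 2xℏ²ψ′ + (1 + ℏ)ψ]`.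
In particular, if `ψ` satisfies the quantum curve equation on `(0, ∞)`, then
`ψ̂` satisfies the transformed equation on `(0, ∞)`. -/
theorem quantum_curve_gauge_transform (h : ℝ) (hh : h ≠ 0) (ψ : ℝ → ℝ)
    (hψ : ∀ x : ℝ, 0 < x → DifferentiableAt ℝ ψ x ∧ DifferentiableAt ℝ (deriv ψ) x)
    (ψhat : ℝ → ℝ) (hψhat : ∀ x : ℝ, ψhat x = x ^ (-(1 / h)) * ψ x) :
    (∀ x : ℝ, 0 < x → DifferentiableAt ℝ ψhat x ∧ DifferentiableAt ℝ (deriv ψhat) x) ∧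
    (∀ x : ℝ, 0 < x →
      (4 - x ^ 2) * h ^ 2 * deriv (deriv ψhat) x
        - 2 * x * h * (1 + h - 4 / x ^ 2) * deriv ψhat x
        + (4 / x ^ 2) * (1 - h) * ψhat x
      = x ^ (-(1 / h)) *
          ((4 - x ^ 2) * h ^ 2 * deriv (deriv ψ) x - 2 * x * h ^ 2 * deriv ψ x
            + (1 + h) * ψ x)) ∧
    ((∀ x : ℝ, 0 < x →
        (4 - x ^ 2) * h ^ 2 * deriv (deriv ψ) x - 2 * x * h ^ 2 * deriv ψ x
          + (1 + h) * ψ x = 0) →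
      ∀ x : ℝ, 0 < x →
        (4 - x ^ 2) * h ^ 2 * deriv (deriv ψhat) x
          - 2 * x * h * (1 + h - 4 / x ^ 2) * deriv ψhat x
          + (4 / x ^ 2) * (1 - h) * ψhat x = 0) := by
  set a : ℝ := -(1 / h) with ha
  have heq : ψhat = fun y : ℝ => y ^ a * ψ y := funext hψhat
  -- first derivative
  have key : ∀ x : ℝ, 0 < x →
      HasDerivAt ψhat (a * x ^ (a - 1) * ψ x + x ^ a * deriv ψ x) x := by
    intro x hx
    have h1 : HasDerivAt (fun y : ℝ => y ^ a) (a * x ^ (a - 1)) x :=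
      Real.hasDerivAt_rpow_const (Or.inl hx.ne')
    have h2 := h1.mul (hψ x hx).1.hasDerivAt
    rw [heq]
    exact h2
  have dψhat : ∀ x : ℝ, 0 < x →
      deriv ψhat x = a * x ^ (a - 1) * ψ x + x ^ a * deriv ψ x :=
    fun x hx => (key x hx).deriv
  -- second derivative
  have key2 : ∀ x : ℝ, 0 < x →
      HasDerivAt (deriv ψhat)
        (a * (a - 1) * x ^ (a - 2) * ψ x + 2 * a * x ^ (a - 1) * deriv ψ x
          + x ^ a * deriv (deriv ψ) x) x := by
    intro x hx
    have hF : HasDerivAt (fun y : ℝ => a * y ^ (a - 1) * ψ y + y ^ a * deriv ψ y)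
        (a * (a - 1) * x ^ (a - 2) * ψ x + 2 * a * x ^ (a - 1) * deriv ψ x
          + x ^ a * deriv (deriv ψ) x) x := by
      have p1 : HasDerivAt (fun y : ℝ => y ^ (a - 1)) ((a - 1) * x ^ (a - 1 - 1)) x :=
        Real.hasDerivAt_rpow_const (Or.inl hx.ne')
      have p1' : HasDerivAt (fun y : ℝ => a * y ^ (a - 1)) (a * ((a - 1) * x ^ (a - 1 - 1))) x :=
        p1.const_mul a
      have p2 : HasDerivAt (fun y : ℝ => y ^ a) (a * x ^ (a - 1)) x :=
        Real.hasDerivAt_rpow_const (Or.inl hx.ne')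
      have q1 := p1'.mul (hψ x hx).1.hasDerivAt
      have q2 := p2.mul (hψ x hx).2.hasDerivAt
      have := q1.add q2
      convert this using 1
      any_goals rfl
      have : a - 1 - 1 = a - 2 := by ring
      rw [this]
      ring
    apply hF.congr_of_eventuallyEq
    filter_upwards [isOpen_Ioi.eventually_mem hx] with y hy
    exact dψhat y hy
  have d2ψhat : ∀ x : ℝ, 0 < x →
      deriv (deriv ψhat) x = a * (a - 1) * x ^ (a - 2) * ψ x
        + 2 * a * x ^ (a - 1) * deriv ψ x + x ^ a * deriv (deriv ψ) x :=
    fun x hx => (key2 x hx).deriv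
  have main : ∀ x : ℝ, 0 < x →
      (4 - x ^ 2) * h ^ 2 * deriv (deriv ψhat) x
        - 2 * x * h * (1 + h - 4 / x ^ 2) * deriv ψhat x
        + (4 / x ^ 2) * (1 - h) * ψhat x
      = x ^ a *
          ((4 - x ^ 2) * h ^ 2 * deriv (deriv ψ) x - 2 * x * h ^ 2 * deriv ψ x
            + (1 + h) * ψ x) := by
    intro x hx
    have e1 : x ^ (a - 1) = x ^ a / x := by
      rw [Real.rpow_sub hx, Real.rpow_one]
    have e2 : x ^ (a - 2) = x ^ a / x ^ 2 := by
      rw [Real.rpow_sub hx, show (2:ℝ) = ((2:ℕ):ℝ) by norm_num, Real.rpow_natCast]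
    rw [d2ψhat x hx, dψhat x hx, hψhat x, e1, e2, ha]
    field_simp
    ring
  refine ⟨fun x hx => ⟨(key x hx).differentiableAt, (key2 x hx).differentiableAt⟩,
    main, fun hyp x hx => ?_⟩
  rw [main x hx, hyp x hx, mul_zero]
end

section
/- Work in the field ℚ(h) of rational functions in one variable h over ℚ. Define a sequence G_d ∈ ℚ(h) for d ≥ −1 by G_{−1} = 0, G₀ = −h^{−2}, and for d ≥ 1, G_d = [ (1 − (2d² − 3d + 3/2)·h²)·G_{d−1} + h²·G_{d−2} ] / ( d²·(1 − (d − 1/2)²·h²) ), which is the recursion d²(1 − (d − 1/2)²h²)G_d = (1 − (2d² − 3d + 3/2)h²)G_{d−1} + h²G_{d−2} satisfied by the degree-d one-point Θ-Gromov–Witten series of P¹. Then for every d ≥ 0, the rational function h² · ∏_{m=1}^{d}(4 − (2m−1)²·h²) · G_d is a polynomial in h, i.e. lies in ℚ[h] ⊂ ℚ(h). (Hence G_d is a rational function of h² with poles only at h² = 0 and h² = 4/(2m−1)² for 1 ≤ m ≤ d, the pole at each 4/(2m−1)² being simple.) -/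
open RatFunc Polynomial

/-- in `ℚ(h)` (with `h = RatFunc.X`), define `G_d` for `d ≥ −1`
by `G_{−1} = 0`, `G₀ = −h^{−2}` and the recursion
`d²(1 − (d − 1/2)²h²)·G_d = (1 − (2d² − 3d + 3/2)h²)·G_{d−1} + h²·G_{d−2}`.
Then for every `d ≥ 0` the rational function
`h²·∏_{m=1}^{d}(4 − (2m−1)²h²)·G_d` is a polynomial in `h`. -/
theorem theta_one_point_pole_structure (G : ℕ → RatFunc ℚ)
    (h0 : G 0 = -(RatFunc.X : RatFunc ℚ) ^ (-2 : ℤ))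
    (h1 : (1 : RatFunc ℚ) ^ 2 * (1 - ((1 : RatFunc ℚ) - 1 / 2) ^ 2 * RatFunc.X ^ 2) * G 1
      = (1 - (2 * (1 : RatFunc ℚ) ^ 2 - 3 * 1 + 3 / 2) * RatFunc.X ^ 2) * G 0)
    (hrec : ∀ d : ℕ, 2 ≤ d →
      ((d : RatFunc ℚ)) ^ 2 * (1 - ((d : RatFunc ℚ) - 1 / 2) ^ 2 * RatFunc.X ^ 2) * G d
        = (1 - (2 * (d : RatFunc ℚ) ^ 2 - 3 * (d : RatFunc ℚ) + 3 / 2) * RatFunc.X ^ 2)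
            * G (d - 1)
          + RatFunc.X ^ 2 * G (d - 2)) :
    ∀ d : ℕ, ∃ p : Polynomial ℚ,
      RatFunc.X ^ 2 *
          (∏ m ∈ Finset.Icc 1 d, (4 - (2 * (m : RatFunc ℚ) - 1) ^ 2 * RatFunc.X ^ 2)) *
          G d
        = algebraMap (Polynomial ℚ) (RatFunc ℚ) p := by
  haveI : CharZero (RatFunc ℚ) :=
    charZero_of_injective_algebraMap (algebraMap ℚ (RatFunc ℚ)).injective
  have hX0 : (RatFunc.X : RatFunc ℚ)^2 * G 0 = -1 := by
    have hX := RatFunc.X_ne_zero (K := ℚ)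
    rw [h0, zpow_neg, mul_neg, ← zpow_natCast (RatFunc.X : RatFunc ℚ) 2]
    norm_num
    rw [mul_inv_cancel₀ (pow_ne_zero 2 hX)]
  intro d
  induction d using Nat.strong_induction_on with
  | _ d ih =>
    match d, ih with
    | 0, _ =>
      refine ⟨-1, ?_⟩
      simpa using hX0
    | 1, _ =>
      refine ⟨Polynomial.C 2 * Polynomial.X^2 - 4, ?_⟩
      have hprod : (∏ m ∈ Finset.Icc (1:ℕ) 1, (4 - (2 * (m : RatFunc ℚ) - 1) ^ 2 * RatFunc.X ^ 2))
          = 4 - RatFunc.X ^ 2 := by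
        rw [Finset.Icc_self, Finset.prod_singleton]
        norm_num
      rw [hprod]
      have halg : algebraMap (Polynomial ℚ) (RatFunc ℚ) (Polynomial.C 2 * Polynomial.X^2 - 4)
          = 2 * RatFunc.X ^ 2 - 4 := by
        simp only [map_sub, map_mul, map_pow, map_ofNat, RatFunc.algebraMap_C,
          RatFunc.algebraMap_X]
      rw [halg]
      linear_combination (4 * RatFunc.X ^ 2) * h1 + (4 - 2 * RatFunc.X ^ 2) * hX0
    | (n+2), ih =>
      obtain ⟨p1, hp1⟩ := ih (n+1) (by omega)
      obtain ⟨p0, hp0⟩ := ih n (by omega)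
      have hr := hrec (n+2) (by omega)
      have hc : ((n : RatFunc ℚ) + 2) ≠ 0 := by
        have h2 : (((n+2 : ℕ)) : RatFunc ℚ) ≠ 0 := Nat.cast_ne_zero.mpr (by omega)
        push_cast at h2; exact h2
      refine ⟨Polynomial.C ((((n:ℚ)+2)^2)⁻¹) *
        (4 * ((1 - Polynomial.C (2*((n:ℚ)+2)^2 - 3*((n:ℚ)+2) + 3/2) * Polynomial.X^2) * p1
          + Polynomial.X^2 * (4 - Polynomial.C ((2*((n:ℚ)+1)-1)^2) * Polynomial.X^2) * p0)), ?_⟩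
      have halg : algebraMap (Polynomial ℚ) (RatFunc ℚ) (Polynomial.C ((((n:ℚ)+2)^2)⁻¹) *
        (4 * ((1 - Polynomial.C (2*((n:ℚ)+2)^2 - 3*((n:ℚ)+2) + 3/2) * Polynomial.X^2) * p1
          + Polynomial.X^2 * (4 - Polynomial.C ((2*((n:ℚ)+1)-1)^2) * Polynomial.X^2) * p0)))
        = ((((n:RatFunc ℚ)+2)^2)⁻¹) *
        (4 * ((1 - (2*((n:RatFunc ℚ)+2)^2 - 3*((n:RatFunc ℚ)+2) + 3/2) * RatFunc.X^2)
            * algebraMap _ _ p1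
          + RatFunc.X^2 * (4 - ((2*((n:RatFunc ℚ)+1)-1)^2) * RatFunc.X^2)
            * algebraMap _ _ p0)) := by
        simp only [map_mul, map_add, map_sub, map_pow, map_one, map_ofNat, map_inv₀,
          RatFunc.algebraMap_C, RatFunc.algebraMap_X, map_div₀, map_natCast]
      rw [halg]
      have hprod2 : (∏ m ∈ Finset.Icc (1:ℕ) (n+2), (4 - (2 * (m : RatFunc ℚ) - 1) ^ 2 * RatFunc.X ^ 2))
          = (∏ m ∈ Finset.Icc (1:ℕ) (n+1), (4 - (2 * (m : RatFunc ℚ) - 1) ^ 2 * RatFunc.X ^ 2))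
            * (4 - (2 * ((n:RatFunc ℚ)+2) - 1) ^ 2 * RatFunc.X ^ 2) := by
        rw [Finset.prod_Icc_succ_top (by omega)]
        push_cast; ring
      have hprod1 : (∏ m ∈ Finset.Icc (1:ℕ) (n+1), (4 - (2 * (m : RatFunc ℚ) - 1) ^ 2 * RatFunc.X ^ 2))
          = (∏ m ∈ Finset.Icc (1:ℕ) n, (4 - (2 * (m : RatFunc ℚ) - 1) ^ 2 * RatFunc.X ^ 2))
            * (4 - (2 * ((n:RatFunc ℚ)+1) - 1) ^ 2 * RatFunc.X ^ 2) := by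
        rw [Finset.prod_Icc_succ_top (by omega)]
        push_cast; ring
      rw [hprod2]
      have hc2 : ((((n:RatFunc ℚ))+2)^2) ≠ 0 := pow_ne_zero 2 hc
      rw [inv_mul_eq_div, eq_div_iff hc2]
      have hrn : ((n:RatFunc ℚ)+2)^2 * (1 - ((n:RatFunc ℚ)+2 - 1/2)^2 * RatFunc.X^2) * G (n+2)
          = (1 - (2*((n:RatFunc ℚ)+2)^2 - 3*((n:RatFunc ℚ)+2) + 3/2) * RatFunc.X^2) * G (n+1)
            + RatFunc.X^2 * G n := by
        have hcast : (((n+2:ℕ)) : RatFunc ℚ) = (n:RatFunc ℚ)+2 := by push_cast; ring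
        rw [hcast] at hr
        exact hr
      rw [hprod1] at hp1 ⊢
      linear_combination (4 * RatFunc.X^2
            * (∏ m ∈ Finset.Icc (1:ℕ) n, (4 - (2 * (m : RatFunc ℚ) - 1) ^ 2 * RatFunc.X ^ 2))
            * (4 - (2 * ((n:RatFunc ℚ)+1) - 1) ^ 2 * RatFunc.X ^ 2)) * hrn
        + (4 * (1 - (2*((n:RatFunc ℚ)+2)^2 - 3*((n:RatFunc ℚ)+2) + 3/2) * RatFunc.X^2)) * hp1
        + (4 * RatFunc.X^2 * (4 - (2*((n:RatFunc ℚ)+1)-1)^2 * RatFunc.X^2)) * hp0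
end
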